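/- arXiv:0809.2938 — 4 statements merged into one kernel-verified Lean document; each statement's English description precedes it below -/
import Mathlib

section
/- Let (X,d) be a compact metric space, f : X → X a continuous map, and μ an ergodic f-invariant Borel probability measure. For every ε > 0 and μ-almost every x ∈ X, limsup_{n→∞} (1/n) log R_n(x,ε) ≤ h_μ(f). -/
open MeasureTheory Filter Set Metric Topology
open scoped ENNReal NNReal

set_option linter.unusedSectionVars false
noncomputable section

/-- The dynamical (Bowen) ball `B(x,n,ε)`. -/
def dynBall {X : Type*} [PseudoMetricSpace X] (f : X → X) (x : X) (n : ℕ) (ε : ℝ) : Set X :=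
  {y | ∀ j < n, dist (f^[j] x) (f^[j] y) < ε}

/-- The `n`-th return time `R_n(x,ε)` of `x` to the dynamical ball `B(x,n,ε)`
(junk value `0` when the orbit never returns; theorems assert nonemptiness of the
return-time set separately, which corresponds to finiteness of the return time). -/
def retTime {X : Type*} [PseudoMetricSpace X] (f : X → X) (x : X) (n : ℕ) (ε : ℝ) : ℕ :=
  sInf {k | 1 ≤ k ∧ f^[k] x ∈ dynBall f x n ε}

/-- The `n`-th minimal return time `S_n(x,ε)` of the dynamical ball `B(x,n,ε)` to itself. -/
def minRetTime {X : Type*} [PseudoMetricSpace X] (f : X → X) (x : X) (n : ℕ) (ε : ℝ) : ℕ :=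
  sInf {k | 1 ≤ k ∧ (f^[k] ⁻¹' dynBall f x n ε ∩ dynBall f x n ε).Nonempty}

/-- `limsup_{n→∞} (1/n) log R_n(x,ε)`, as an extended nonnegative real. -/
def recRateSup {X : Type*} [PseudoMetricSpace X] (f : X → X) (x : X) (ε : ℝ) : ℝ≥0∞ :=
  Filter.atTop.limsup fun n : ℕ => ENNReal.ofReal (Real.log (retTime f x n ε) / n)

/-- `liminf_{n→∞} (1/n) log R_n(x,ε)`, as an extended nonnegative real. -/
def recRateInf {X : Type*} [PseudoMetricSpace X] (f : X → X) (x : X) (ε : ℝ) : ℝ≥0∞ :=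
  Filter.atTop.liminf fun n : ℕ => ENNReal.ofReal (Real.log (retTime f x n ε) / n)

/-- `P : Fin m → Set X` is a finite measurable partition of `X` (some cells may be empty). -/
def IsFinPartition {X : Type*} [MeasurableSpace X] {m : ℕ} (P : Fin m → Set X) : Prop :=
  (∀ i, MeasurableSet (P i)) ∧ Pairwise (Function.onFun Disjoint P) ∧ (⋃ i, P i) = univ

/-- The entropy `H_μ(P) = -∑ μ(P i) log μ(P i)` of a finite family of sets. -/
def entH {X : Type*} [MeasurableSpace X] (μ : Measure X) {ι : Type*} [Fintype ι]
    (P : ι → Set X) : ℝ :=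
  -∑ i, (μ (P i)).toReal * Real.log (μ (P i)).toReal

/-- The dynamical refinement `Q^{(n)} = ⋁_{j=0}^{n-1} f⁻ʲ Q` of a finite partition,
indexed by itineraries `s : Fin n → Fin m`. -/
def refinePart {X : Type*} (f : X → X) {m : ℕ} (P : Fin m → Set X) (n : ℕ) :
    (Fin n → Fin m) → Set X :=
  fun s => ⋂ j : Fin n, f^[(j : ℕ)] ⁻¹' P (s j)

/-- The Kolmogorov–Sinai entropy `h_μ(f,Q) = lim_n (1/n) H_μ(Q^{(n)})` of `μ` with respect to
a finite partition (the limit exists by subadditivity, so it equals the `liminf` used here). -/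
def partKS {X : Type*} [MeasurableSpace X] (μ : Measure X) (f : X → X) {m : ℕ}
    (P : Fin m → Set X) : ℝ≥0∞ :=
  Filter.atTop.liminf fun n : ℕ => ENNReal.ofReal (entH μ (refinePart f P n) / n)

/-- The metric (Kolmogorov–Sinai) entropy `h_μ(f)`: the supremum of `h_μ(f,Q)` over all
finite measurable partitions `Q`. -/
def metricEntropy {X : Type*} [MeasurableSpace X] (μ : Measure X) (f : X → X) : ℝ≥0∞ :=
  ⨆ (m : ℕ) (P : Fin m → Set X) (_ : IsFinPartition P), partKS μ f P

namespace OWAux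

variable {X : Type*}

/-! ### Cells of refined partitions -/

/-- The cell of the partition `P` containing `y` (empty if there is none). -/
def part0 {m : ℕ} (P : Fin m → Set X) (y : X) : Set X := ⋃ i ∈ {i | y ∈ P i}, P i

/-- The cell of the `n`-th refinement containing `x`. -/
def cellOf {m : ℕ} (f : X → X) (P : Fin m → Set X) (n : ℕ) (x : X) : Set X :=
  ⋂ j : Fin n, f^[(j : ℕ)] ⁻¹' part0 P (f^[(j : ℕ)] x)

section Cells

variable {m : ℕ} {P : Fin m → Set X} {f : X → X}

lemma exists_mem_part (hP : (⋃ i, P i) = univ) (y : X) : ∃ i, y ∈ P i := by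
  have : y ∈ ⋃ i, P i := hP ▸ mem_univ y
  simpa using this

lemma part0_eq (hd : Pairwise (Function.onFun Disjoint P)) {y : X} {i : Fin m}
    (hi : y ∈ P i) : part0 P y = P i := by
  apply Set.Subset.antisymm
  · refine Set.iUnion₂_subset fun i' hi' => ?_
    rcases eq_or_ne i' i with rfl | hne
    · exact subset_rfl
    · exact absurd (hd hne) (Set.not_disjoint_iff.2 ⟨y, hi', hi⟩)
  · exact Set.subset_iUnion₂ (s := fun i' _ => P i') i hi

lemma mem_refinePart {n : ℕ} {s : Fin n → Fin m} {y : X} :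
    y ∈ refinePart f P n s ↔ ∀ j : Fin n, f^[(j : ℕ)] y ∈ P (s j) := by
  simp [refinePart]

lemma cellOf_eq_refinePart (hd : Pairwise (Function.onFun Disjoint P)) {n : ℕ} {x : X}
    {s : Fin n → Fin m} (hx : x ∈ refinePart f P n s) :
    cellOf f P n x = refinePart f P n s := by
  rw [mem_refinePart] at hx
  unfold cellOf refinePart
  exact Set.iInter_congr fun j => by rw [part0_eq hd (hx j)]

lemma exists_refinePart_mem (hP : (⋃ i, P i) = univ) (n : ℕ) (x : X) :
    ∃ s, x ∈ refinePart f P n s := by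
  refine ⟨fun j => (exists_mem_part hP (f^[(j : ℕ)] x)).choose, ?_⟩
  rw [mem_refinePart]
  exact fun j => (exists_mem_part hP (f^[(j : ℕ)] x)).choose_spec

lemma mem_cellOf (hd : Pairwise (Function.onFun Disjoint P)) (hcov : (⋃ i, P i) = univ)
    (n : ℕ) (x : X) : x ∈ cellOf f P n x := by
  obtain ⟨s, hs⟩ := exists_refinePart_mem (f := f) hcov n x
  rw [cellOf_eq_refinePart hd hs]
  exact hs

lemma cellOf_anti {n n' : ℕ} (h : n ≤ n') (x : X) : cellOf f P n' x ⊆ cellOf f P n x := by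
  intro y hy
  simp only [cellOf, Set.mem_iInter] at hy ⊢
  exact fun j => hy ⟨(j : ℕ), lt_of_lt_of_le j.2 h⟩

lemma cellOf_add_subset (n₁ n₂ : ℕ) (x : X) :
    cellOf f P (n₁ + n₂) x ⊆ f^[n₁] ⁻¹' cellOf f P n₂ (f^[n₁] x) := by
  intro y hy
  simp only [cellOf, Set.mem_preimage, Set.mem_iInter] at hy ⊢
  intro j
  have hj : ((j : ℕ) + n₁) < n₁ + n₂ := by omega
  have := hy ⟨(j : ℕ) + n₁, hj⟩
  simpa [← Function.iterate_add_apply] using this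

lemma refinePart_measurable [MeasurableSpace X] (hP : IsFinPartition P) (hf : Measurable f)
    {n : ℕ} (s : Fin n → Fin m) : MeasurableSet (refinePart f P n s) := by
  exact MeasurableSet.iInter fun j => (hf.iterate (j : ℕ)) (hP.1 (s j))

lemma refinePart_disjoint (hd : Pairwise (Function.onFun Disjoint P)) {n : ℕ} :
    Pairwise (Function.onFun Disjoint (refinePart f P n)) := by
  intro s t hst
  obtain ⟨j, hj⟩ : ∃ j, s j ≠ t j := by
    by_contra h
    push_neg at h
    exact hst (funext h)
  refine Set.disjoint_left.2 fun y hy hy' => ?_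
  rw [mem_refinePart] at hy hy'
  exact Set.disjoint_left.1 (hd hj) (hy j) (hy' j)

lemma refinePart_cover (hP : (⋃ i, P i) = univ) (n : ℕ) :
    (⋃ s, refinePart f P n s) = univ := by
  refine Set.eq_univ_of_forall fun x => ?_
  obtain ⟨s, hs⟩ := exists_refinePart_mem (f := f) hP n x
  exact Set.mem_iUnion.2 ⟨s, hs⟩

lemma sum_refinePart [MeasurableSpace X] (μ : Measure X) [IsProbabilityMeasure μ]
    (hP : IsFinPartition P) (hf : Measurable f) (n : ℕ) :
    ∑ s : Fin n → Fin m, μ (refinePart f P n s) = 1 := by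
  rw [← tsum_fintype (L := .unconditional _), ← measure_iUnion (fun s t hst => refinePart_disjoint hP.2.1 hst)
    (fun s => refinePart_measurable hP hf s), refinePart_cover hP.2.2, measure_univ]

lemma sum_toReal_refinePart [MeasurableSpace X] (μ : Measure X) [IsProbabilityMeasure μ]
    (hP : IsFinPartition P) (hf : Measurable f) (n : ℕ) :
    ∑ s : Fin n → Fin m, (μ (refinePart f P n s)).toReal = 1 := by
  rw [← ENNReal.toReal_sum (fun s _ => measure_ne_top μ _), sum_refinePart μ hP hf n,
    ENNReal.toReal_one]

lemma cellOf_is_refinePart [MeasurableSpace X] (hP : IsFinPartition P) (n : ℕ) (x : X) :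
    ∃ s, cellOf f P n x = refinePart f P n s := by
  obtain ⟨s, hs⟩ := exists_refinePart_mem (f := f) hP.2.2 n x
  exact ⟨s, cellOf_eq_refinePart hP.2.1 hs⟩

end Cells

/-! ### The information function of a refined partition -/

section Fcell

variable {m : ℕ} [MeasurableSpace X] (μ : Measure X) (f : X → X) (P : Fin m → Set X)

/-- `-log μ(C_k(x))`, the information function of the `k`-th refined partition. -/
def Fcell (k : ℕ) (x : X) : ℝ := -Real.log (μ (cellOf f P k x)).toReal

variable {μ f P}

lemma Fcell_eq_sum [IsProbabilityMeasure μ] (hP : IsFinPartition P) (k : ℕ) (x : X) :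
    Fcell μ f P k x
      = ∑ s : Fin k → Fin m,
          (refinePart f P k s).indicator
            (fun _ => -Real.log (μ (refinePart f P k s)).toReal) x := by
  classical
  obtain ⟨s₀, hs₀⟩ := exists_refinePart_mem (f := f) hP.2.2 k x
  have hcell : cellOf f P k x = refinePart f P k s₀ := cellOf_eq_refinePart hP.2.1 hs₀
  rw [Finset.sum_eq_single s₀]
  · rw [Set.indicator_of_mem hs₀, Fcell, hcell]
  · intro t _ hts
    refine Set.indicator_of_notMem (fun hxt => hts ?_) _
    by_contra h
    exact Set.disjoint_left.1 (refinePart_disjoint hP.2.1 (Ne.symm hts)) hs₀ hxt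
  · intro h
    exact absurd (Finset.mem_univ s₀) h

lemma toReal_measure_le_one [IsProbabilityMeasure μ] (s : Set X) : (μ s).toReal ≤ 1 := by
  simpa using ENNReal.toReal_mono (by simp) (prob_le_one (μ := μ) (s := s))

lemma Fcell_nonneg [IsProbabilityMeasure μ] (k : ℕ) (x : X) : 0 ≤ Fcell μ f P k x := by
  have := Real.log_nonpos (ENNReal.toReal_nonneg (a := μ (cellOf f P k x)))
    (toReal_measure_le_one _)
  simp only [Fcell]
  linarith

lemma Fcell_measurable [IsProbabilityMeasure μ] (hP : IsFinPartition P) (hf : Measurable f)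
    (k : ℕ) : Measurable (Fcell μ f P k) := by
  have : Fcell μ f P k = fun x => ∑ s : Fin k → Fin m,
      (refinePart f P k s).indicator
        (fun _ => -Real.log (μ (refinePart f P k s)).toReal) x :=
    funext fun x => Fcell_eq_sum hP k x
  rw [this]
  exact Finset.measurable_sum _ fun s _ =>
    (measurable_const.indicator (refinePart_measurable hP hf s))

lemma Fcell_bounded [IsProbabilityMeasure μ] (hP : IsFinPartition P) (k : ℕ) (x : X) :
    |Fcell μ f P k x| ≤ ∑ s : Fin k → Fin m, |Real.log (μ (refinePart f P k s)).toReal| := by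
  obtain ⟨s₀, hs₀⟩ := cellOf_is_refinePart (f := f) hP k x
  have : |Fcell μ f P k x| = |Real.log (μ (refinePart f P k s₀)).toReal| := by
    rw [Fcell, hs₀, abs_neg]
  rw [this]
  exact Finset.single_le_sum
    (f := fun s : Fin k → Fin m => |Real.log (μ (refinePart f P k s)).toReal|)
    (fun s _ => abs_nonneg _) (Finset.mem_univ s₀)

lemma Fcell_integrable [IsProbabilityMeasure μ] (hP : IsFinPartition P) (hf : Measurable f)
    (k : ℕ) : Integrable (Fcell μ f P k) μ := by
  refine Integrable.mono' (integrable_const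
    (∑ s : Fin k → Fin m, |Real.log (μ (refinePart f P k s)).toReal|))
    (Fcell_measurable hP hf k).aestronglyMeasurable
    (Filter.Eventually.of_forall fun x => Fcell_bounded hP k x)

lemma integral_Fcell [IsProbabilityMeasure μ] (hP : IsFinPartition P) (hf : Measurable f)
    (k : ℕ) : ∫ x, Fcell μ f P k x ∂μ = entH μ (refinePart f P k) := by
  have : ∫ x, Fcell μ f P k x ∂μ = ∫ x, (∑ s : Fin k → Fin m,
      (refinePart f P k s).indicator
        (fun _ => -Real.log (μ (refinePart f P k s)).toReal) x) ∂μ :=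
    integral_congr_ae (Filter.Eventually.of_forall fun x => Fcell_eq_sum hP k x)
  rw [this, integral_finset_sum _ (fun s _ =>
    (integrable_const _).indicator (refinePart_measurable hP hf s))]
  simp only [integral_indicator_const _ (refinePart_measurable hP hf _), entH,
    smul_eq_mul, ← Finset.sum_neg_distrib, mul_neg, measureReal_def]

lemma entH_nonneg [IsProbabilityMeasure μ] {ι : Type*} [Fintype ι] (Q : ι → Set X) :
    0 ≤ entH μ Q := by
  rw [entH, le_neg, neg_zero]
  refine Finset.sum_nonpos fun i _ => ?_
  have h1 := Real.log_nonpos (ENNReal.toReal_nonneg (a := μ (Q i))) (toReal_measure_le_one _)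
  exact mul_nonpos_of_nonneg_of_nonpos ENNReal.toReal_nonneg h1

end Fcell

/-! ### The no-return set has small measure -/

lemma measure_noReturn [MeasurableSpace X] {μ : Measure X} [IsProbabilityMeasure μ]
    {f : X → X} (hpres : MeasurePreserving f μ μ) {A : Set X} (hA : MeasurableSet A) (t : ℕ) :
    μ {x | x ∈ A ∧ ∀ k, 1 ≤ k → k ≤ t → f^[k] x ∉ A} ≤ (((t : ℝ≥0∞) + 1))⁻¹ := by
  classical
  set B := {x | x ∈ A ∧ ∀ k, 1 ≤ k → k ≤ t → f^[k] x ∉ A} with hBdef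
  have hBmeas : MeasurableSet B := by
    have : B = A ∩ ⋂ (k : ℕ), ⋂ (_ : 1 ≤ k), ⋂ (_ : k ≤ t), f^[k] ⁻¹' Aᶜ := by
      ext x
      simp [hBdef, Set.mem_iInter, and_assoc]
    rw [this]
    exact hA.inter (MeasurableSet.iInter fun k => MeasurableSet.iInter fun _ =>
      MeasurableSet.iInter fun _ => (hpres.measurable.iterate k) hA.compl)
  have hclaim : ∀ i j : ℕ, i < j → j ≤ t → Disjoint (f^[i] ⁻¹' B) (f^[j] ⁻¹' B) := by
    intro i j hij hjt
    refine Set.disjoint_left.2 fun x hxi hxj => ?_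
    have hy : f^[i] x ∈ B := hxi
    have hz : f^[j] x ∈ B := hxj
    have hiter : f^[j] x = f^[j - i] (f^[i] x) := by
      rw [← Function.iterate_add_apply]
      congr 1
      omega
    exact hy.2 (j - i) (by omega) (by omega) (by rw [← hiter]; exact hz.1)
  have hdisj : Set.PairwiseDisjoint (↑(Finset.range (t + 1))) (fun i => f^[i] ⁻¹' B) := by
    intro i hi j hj hij
    simp only [Finset.coe_range, Set.mem_Iio] at hi hj
    rcases lt_or_gt_of_ne hij with h | h
    · exact hclaim i j h (by omega)
    · exact (hclaim j i h (by omega)).symm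
  have hsum : ∑ i ∈ Finset.range (t + 1), μ (f^[i] ⁻¹' B) ≤ 1 := by
    rw [← measure_biUnion_finset hdisj
      (fun i _ => (hpres.measurable.iterate i) hBmeas)]
    simpa using prob_le_one (μ := μ)
  have hpre : ∀ i : ℕ, μ (f^[i] ⁻¹' B) = μ B := fun i =>
    (hpres.iterate i).measure_preimage hBmeas.nullMeasurableSet
  have : ((t : ℝ≥0∞) + 1) * μ B ≤ 1 := by
    have := hsum
    simp only [hpre, Finset.sum_const, Finset.card_range, nsmul_eq_mul] at this
    convert this using 2
    push_cast
    ring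
  rw [ENNReal.le_inv_iff_mul_le, mul_comm]
  exact this

/-! ### The maximal ergodic lemma (Garsia) -/

section Maximal

variable [MeasurableSpace X] {μ : Measure X} {T : X → X} (G : X → ℝ)

/-- Birkhoff sum. -/
def birkSum (T : X → X) (G : X → ℝ) (q : ℕ) (x : X) : ℝ :=
  ∑ i ∈ Finset.range q, G (T^[i] x)

/-- Running maximum `max (0, S₁, …, S_N)` of Birkhoff sums. -/
def birkMax (T : X → X) (G : X → ℝ) : ℕ → X → ℝ
  | 0 => fun _ => 0
  | (N + 1) => fun x => max (birkMax T G N x) (birkSum T G (N + 1) x)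

lemma birkSum_succ' (T : X → X) (G : X → ℝ) (q : ℕ) (x : X) :
    birkSum T G (q + 1) x = G x + birkSum T G q (T x) := by
  rw [birkSum, Finset.sum_range_succ']
  simp only [Function.iterate_succ_apply, Function.iterate_zero_apply]
  rw [add_comm]
  rfl

lemma birkMax_nonneg (T : X → X) (G : X → ℝ) (N : ℕ) (x : X) : 0 ≤ birkMax T G N x := by
  induction N with
  | zero => exact le_refl 0
  | succ N ih => exact le_trans ih (le_max_left _ _)

lemma birkMax_mono (T : X → X) (G : X → ℝ) {N N' : ℕ} (h : N ≤ N') (x : X) :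
    birkMax T G N x ≤ birkMax T G N' x := by
  induction N' with
  | zero =>
    have : N = 0 := Nat.le_zero.mp h
    subst this
    exact le_refl _
  | succ N' ih =>
    rcases Nat.lt_or_ge N (N' + 1) with h' | h'
    · exact le_trans (ih (by omega)) (le_max_left _ _)
    · have : N = N' + 1 := by omega
      subst this
      exact le_refl _

lemma birkSum_le_birkMax (T : X → X) (G : X → ℝ) {q N : ℕ} (h : q ≤ N) (x : X) :
    birkSum T G q x ≤ birkMax T G N x := by
  cases q with
  | zero =>
    have : birkSum T G 0 x = 0 := by simp [birkSum]
    rw [this]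
    exact birkMax_nonneg T G N x
  | succ q' =>
    exact le_trans (le_max_right (birkMax T G q' x) _) (birkMax_mono T G h x)

lemma birkMax_succ_eq (T : X → X) (G : X → ℝ) (N : ℕ) (x : X) :
    birkMax T G (N + 1) x = max 0 (G x + birkMax T G N (T x)) := by
  induction N generalizing x with
  | zero =>
    show max (birkMax T G 0 x) (birkSum T G 1 x) = _
    rw [birkSum_succ']
    simp [birkMax, birkSum]
  | succ N ih =>
    show max (birkMax T G (N + 1) x) (birkSum T G (N + 2) x) = _
    rw [ih x, birkSum_succ', max_assoc (0 : ℝ)]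
    have : max (G x + birkMax T G N (T x)) (G x + birkSum T G (N + 1) (T x))
        = G x + max (birkMax T G N (T x)) (birkSum T G (N + 1) (T x)) :=
      max_add_add_left _ _ _
    rw [this]
    rfl

/-- Garsia's maximal ergodic lemma, in the form we need. -/
lemma maximal_ergodic [IsProbabilityMeasure μ] (hT : MeasurePreserving T μ μ)
    (hG : Measurable G) {C : ℝ} (hC : ∀ x, |G x| ≤ C)
    (h : ∀ᵐ x ∂μ, ∃ q, 1 ≤ q ∧ 0 < birkSum T G q x) : 0 ≤ ∫ x, G x ∂μ := by
  classical
  have hne : Nonempty X := by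
    by_contra hn
    rw [not_nonempty_iff] at hn
    simpa [Set.eq_empty_of_isEmpty (Set.univ : Set X)] using measure_univ (μ := μ)
  have hC0 : 0 ≤ C := le_trans (abs_nonneg _) (hC (Classical.arbitrary X))
  have hGint : Integrable G μ :=
    Integrable.mono' (integrable_const C) hG.aestronglyMeasurable
      (Filter.Eventually.of_forall hC)
  have hSmeas : ∀ q, Measurable (birkSum T G q) := fun q =>
    Finset.measurable_sum _ fun i _ => hG.comp (hT.measurable.iterate i)
  have hMmeas : ∀ N, Measurable (birkMax T G N) := by
    intro N
    induction N with
    | zero => exact measurable_const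
    | succ N ih => exact ih.max (hSmeas (N + 1))
  have hMle : ∀ N x, birkMax T G N x ≤ N * C := by
    intro N x
    induction N with
    | zero => simp [birkMax]
    | succ N ih =>
      show max (birkMax T G N x) (birkSum T G (N + 1) x) ≤ _
      refine max_le (le_trans ih ?_) ?_
      · have : (N : ℝ) ≤ (N : ℝ) + 1 := by linarith
        push_cast
        nlinarith
      · have : birkSum T G (N + 1) x ≤ (N + 1) * C := by
          refine le_trans (Finset.sum_le_sum fun i _ => (abs_le.1 (hC (T^[i] x))).2) ?_
          simp [Finset.sum_const]
        push_cast
        linarith [this]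
  have hMint : ∀ N, Integrable (birkMax T G N) μ := by
    intro N
    refine Integrable.mono' (integrable_const ((N : ℝ) * C)) (hMmeas N).aestronglyMeasurable
      (Filter.Eventually.of_forall fun x => ?_)
    rw [Real.norm_eq_abs, abs_of_nonneg (birkMax_nonneg T G N x)]
    exact hMle N x
  have hMTmeas : ∀ N, Measurable fun x => birkMax T G N (T x) := fun N =>
    (hMmeas N).comp hT.measurable
  have hMTint : ∀ N, Integrable (fun x => birkMax T G N (T x)) μ := by
    intro N
    refine Integrable.mono' (integrable_const ((N : ℝ) * C)) (hMTmeas N).aestronglyMeasurable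
      (Filter.Eventually.of_forall fun x => ?_)
    rw [Real.norm_eq_abs, abs_of_nonneg (birkMax_nonneg T G N (T x))]
    exact hMle N (T x)
  have hMT_eq : ∀ N, ∫ x, birkMax T G N (T x) ∂μ = ∫ x, birkMax T G N x ∂μ := by
    intro N
    rw [← MeasureTheory.integral_map hT.measurable.aemeasurable
      (by rw [hT.map_eq]; exact (hMmeas N).aestronglyMeasurable), hT.map_eq]
  set E : ℕ → Set X := fun N => {x | 0 < birkMax T G (N + 1) x} with hEdef
  have hEmeas : ∀ N, MeasurableSet (E N) :=
    fun N => measurableSet_lt measurable_const (hMmeas (N + 1))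
  have key : ∀ N, 0 ≤ ∫ x in E N, G x ∂μ := by
    intro N
    have hpt : ∀ x ∈ E N, birkMax T G (N + 1) x - birkMax T G N (T x) ≤ G x := by
      intro x hx
      have hx' : (0:ℝ) < birkMax T G (N + 1) x := hx
      rw [birkMax_succ_eq] at hx' ⊢
      have hmax : max (0:ℝ) (G x + birkMax T G N (T x)) = G x + birkMax T G N (T x) := by
        rcases le_or_gt (G x + birkMax T G N (T x)) 0 with hle | hlt
        · rw [max_eq_left hle] at hx'
          exact absurd hx' (lt_irrefl 0)
        · exact max_eq_right hlt.le
      rw [hmax]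
      linarith
    have h1 : ∫ x in E N, (birkMax T G (N + 1) x - birkMax T G N (T x)) ∂μ
        ≤ ∫ x in E N, G x ∂μ :=
      setIntegral_mono_on (((hMint (N + 1)).sub (hMTint N)).integrableOn)
        hGint.integrableOn (hEmeas N) hpt
    have h2 : ∫ x in E N, (birkMax T G (N + 1) x - birkMax T G N (T x)) ∂μ
        = ∫ x in E N, birkMax T G (N + 1) x ∂μ - ∫ x in E N, birkMax T G N (T x) ∂μ :=
      integral_sub ((hMint (N + 1)).integrableOn) ((hMTint N).integrableOn)
    have h3 : ∫ x in E N, birkMax T G (N + 1) x ∂μ = ∫ x, birkMax T G (N + 1) x ∂μ :=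
      setIntegral_eq_integral_of_forall_compl_eq_zero fun x hx =>
        le_antisymm (not_lt.1 hx) (birkMax_nonneg T G (N + 1) x)
    have h4 : ∫ x in E N, birkMax T G N (T x) ∂μ ≤ ∫ x, birkMax T G N (T x) ∂μ :=
      setIntegral_le_integral (hMTint N)
        (Filter.Eventually.of_forall fun x => birkMax_nonneg T G N (T x))
    have h6 : ∫ x, birkMax T G N x ∂μ ≤ ∫ x, birkMax T G (N + 1) x ∂μ :=
      integral_mono (hMint N) (hMint (N + 1)) (fun x => birkMax_mono T G (Nat.le_succ N) x)
    rw [h2] at h1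
    rw [h3] at h1
    have := hMT_eq N
    linarith
  have hEmono : Monotone E := by
    intro a b hab x hx
    exact lt_of_lt_of_le hx (birkMax_mono T G (by omega) x)
  have hcover : ∀ᵐ x ∂μ, x ∈ ⋃ N, E N := by
    refine h.mono fun x hx => ?_
    obtain ⟨q, hq1, hq2⟩ := hx
    refine Set.mem_iUnion.2 ⟨q - 1, ?_⟩
    have : q - 1 + 1 = q := by omega
    show 0 < birkMax T G (q - 1 + 1) x
    rw [this]
    exact lt_of_lt_of_le hq2 (birkSum_le_birkMax T G le_rfl x)
  have hrestrict : μ.restrict (⋃ N, E N) = μ := Measure.restrict_eq_self_of_ae_mem hcover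
  have htend := MeasureTheory.tendsto_setIntegral_of_monotone hEmeas hEmono
    (by show Integrable G (μ.restrict (⋃ N, E N)); rw [hrestrict]; exact hGint)
  rw [hrestrict] at htend
  exact ge_of_tendsto htend (Filter.Eventually.of_forall key)

end Maximal

/-! ### Main auxiliary lemmas -/

section MainAux

variable [MeasurableSpace X] {μ : Measure X} {f : X → X} {m : ℕ} {P : Fin m → Set X}

/-- Poincaré recurrence for the cells. -/
lemma lemA [IsProbabilityMeasure μ] (hpres : MeasurePreserving f μ μ)
    (hP : IsFinPartition P) (hfm : Measurable f) :
    ∀ᵐ x ∂μ, ∀ n : ℕ, ∃ k, 1 ≤ k ∧ f^[k] x ∈ cellOf f P n x := by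
  have hcons : Conservative f μ := hpres.conservative
  rw [MeasureTheory.ae_all_iff]
  intro n
  have hae : ∀ᵐ x ∂μ, ∀ s : Fin n → Fin m,
      x ∈ refinePart f P n s → ∃ᶠ k in atTop, f^[k] x ∈ refinePart f P n s := by
    rw [MeasureTheory.ae_all_iff]
    intro s
    exact hcons.ae_mem_imp_frequently_image_mem
      (refinePart_measurable hP hfm s).nullMeasurableSet
  refine hae.mono fun x hx => ?_
  obtain ⟨s, hs⟩ := exists_refinePart_mem (f := f) hP.2.2 n x
  obtain ⟨k, hk1, hk2⟩ := ((hx s hs).and_eventually (eventually_ge_atTop 1)).exists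
  exact ⟨k, hk2, by rw [cellOf_eq_refinePart hP.2.1 hs]; exact hk1⟩

/-- Almost every point lies in cells of positive measure. -/
lemma lemB [IsProbabilityMeasure μ] (hP : IsFinPartition P) (hfm : Measurable f) :
    ∀ᵐ x ∂μ, ∀ n : ℕ, μ (cellOf f P n x) ≠ 0 := by
  rw [MeasureTheory.ae_all_iff]
  intro n
  have hZ : μ (⋃ s ∈ {s : Fin n → Fin m | μ (refinePart f P n s) = 0},
      refinePart f P n s) = 0 := by
    refine (measure_biUnion_null_iff (Set.to_countable _)).2 fun s hs => hs
  have hae : ∀ᵐ x ∂μ, x ∉ ⋃ s ∈ {s : Fin n → Fin m | μ (refinePart f P n s) = 0},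
      refinePart f P n s := by
    rw [MeasureTheory.ae_iff]
    refine measure_mono_null (fun x hx => ?_) hZ
    simpa using hx
  refine hae.mono fun x hx h0 => ?_
  obtain ⟨s, hs⟩ := exists_refinePart_mem (f := f) hP.2.2 n x
  have hcell := cellOf_eq_refinePart hP.2.1 hs
  rw [hcell] at h0
  exact hx (Set.mem_biUnion h0 hs)

/-- Borel–Cantelli control on the return time to the cell (Bad1). -/
lemma lemC [IsProbabilityMeasure μ] (hpres : MeasurePreserving f μ μ)
    (hP : IsFinPartition P) (hfm : Measurable f) {δ : ℝ} (hδ : 0 < δ) :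
    ∀ᵐ x ∂μ, ∀ᶠ n : ℕ in atTop, ∃ k : ℕ, 1 ≤ k ∧
      (k : ℝ) ≤ Real.exp (n * δ) / (μ (cellOf f P n x)).toReal ∧
      f^[k] x ∈ cellOf f P n x := by
  classical
  set Bad : ℕ → Set X := fun n => ⋃ s : Fin n → Fin m,
    (refinePart f P n s ∩ {x | ∀ k, 1 ≤ k →
      k ≤ ⌊Real.exp (n * δ) / (μ (refinePart f P n s)).toReal⌋₊ →
      f^[k] x ∉ refinePart f P n s}) with hBaddef
  have hbound : ∀ n, μ (Bad n) ≤ ENNReal.ofReal (Real.exp (-(n * δ))) := by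
    intro n
    have hterm : ∀ s : Fin n → Fin m,
        μ (refinePart f P n s ∩ {x | ∀ k, 1 ≤ k →
          k ≤ ⌊Real.exp (n * δ) / (μ (refinePart f P n s)).toReal⌋₊ →
          f^[k] x ∉ refinePart f P n s})
        ≤ ENNReal.ofReal (Real.exp (-(n * δ))) * μ (refinePart f P n s) := by
      intro s
      rcases eq_or_ne (μ (refinePart f P n s)) 0 with h0 | h0
      · refine le_trans (le_trans (measure_mono Set.inter_subset_left) h0.le) (zero_le)
      · set A := refinePart f P n s
        set T := ⌊Real.exp (n * δ) / (μ A).toReal⌋₊ with hT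
        have hμA : 0 < (μ A).toReal :=
          ENNReal.toReal_pos h0 (measure_ne_top μ A)
        have h1 : μ (A ∩ {x | ∀ k, 1 ≤ k → k ≤ T → f^[k] x ∉ A})
            ≤ (((T : ℝ≥0∞) + 1))⁻¹ := by
          have hmn := measure_noReturn hpres (refinePart_measurable hP hfm s) T
          have hseteq : A ∩ {x | ∀ k, 1 ≤ k → k ≤ T → f^[k] x ∉ A}
              = {x | x ∈ A ∧ ∀ k, 1 ≤ k → k ≤ T → f^[k] x ∉ A} := by
            ext x
            simp [Set.mem_inter_iff, Set.mem_setOf_eq]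
          rw [hseteq]
          exact hmn
        refine le_trans h1 ?_
        have hreal : ((T : ℝ) + 1)⁻¹ ≤ Real.exp (-(n * δ)) * (μ A).toReal := by
          have hlt : Real.exp (n * δ) / (μ A).toReal < (T : ℝ) + 1 := by
            rw [hT]
            exact Nat.lt_floor_add_one _
          have hpos : (0:ℝ) < Real.exp (n * δ) / (μ A).toReal :=
            div_pos (Real.exp_pos _) hμA
          have := inv_anti₀ hpos hlt.le
          rw [Real.exp_neg]
          calc ((T : ℝ) + 1)⁻¹ ≤ (Real.exp (n * δ) / (μ A).toReal)⁻¹ := this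
            _ = (Real.exp (n * δ))⁻¹ * (μ A).toReal := by
                field_simp
        calc (((T : ℝ≥0∞)) + 1)⁻¹
            = ENNReal.ofReal (((T : ℝ) + 1)⁻¹) := by
              rw [ENNReal.ofReal_inv_of_pos (by positivity)]
              congr 1
              rw [ENNReal.ofReal_add (by positivity) zero_le_one]
              simp [ENNReal.ofReal_natCast]
          _ ≤ ENNReal.ofReal (Real.exp (-(n * δ)) * (μ A).toReal) :=
              ENNReal.ofReal_le_ofReal hreal
          _ = ENNReal.ofReal (Real.exp (-(n * δ))) * μ A := by
              rw [ENNReal.ofReal_mul (Real.exp_nonneg _), ENNReal.ofReal_toReal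
                (measure_ne_top μ A)]
    calc μ (Bad n) ≤ ∑ s : Fin n → Fin m,
        μ (refinePart f P n s ∩ {x | ∀ k, 1 ≤ k →
          k ≤ ⌊Real.exp (n * δ) / (μ (refinePart f P n s)).toReal⌋₊ →
          f^[k] x ∉ refinePart f P n s}) := by
          rw [← tsum_fintype (L := .unconditional _)]
          exact measure_iUnion_le _
      _ ≤ ∑ s : Fin n → Fin m,
          ENNReal.ofReal (Real.exp (-(n * δ))) * μ (refinePart f P n s) :=
          Finset.sum_le_sum fun s _ => hterm s
      _ = ENNReal.ofReal (Real.exp (-(n * δ))) * ∑ s : Fin n → Fin m,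
          μ (refinePart f P n s) := by rw [Finset.mul_sum]
      _ = ENNReal.ofReal (Real.exp (-(n * δ))) := by
          rw [sum_refinePart μ hP hfm n, mul_one]
  have hgeom : (∑' n : ℕ, ENNReal.ofReal (Real.exp (-((n : ℝ) * δ)))) ≠ ∞ := by
    have hform : (fun n : ℕ => ENNReal.ofReal (Real.exp (-((n : ℝ) * δ))))
        = fun n : ℕ => (ENNReal.ofReal (Real.exp (-δ))) ^ n := by
      funext n
      rw [← ENNReal.ofReal_pow (Real.exp_nonneg _), ← Real.exp_nat_mul]
      ring_nf
    rw [hform, ENNReal.tsum_geometric]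
    refine ENNReal.inv_ne_top.2 fun h0 => ?_
    rw [tsub_eq_zero_iff_le] at h0
    have : ENNReal.ofReal (Real.exp (-δ)) < 1 := by
      rw [← ENNReal.ofReal_one]
      refine ENNReal.ofReal_lt_ofReal_iff_of_nonneg (Real.exp_nonneg _) |>.2 ?_
      rw [← Real.exp_zero]
      exact Real.exp_lt_exp.2 (by linarith)
    exact absurd h0 (not_le.2 this)
  have hsum : (∑' n, μ (Bad n)) ≠ ∞ :=
    ne_top_of_le_ne_top hgeom (ENNReal.tsum_le_tsum hbound)
  have hBC := MeasureTheory.ae_eventually_notMem hsum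
  refine hBC.mono fun x hx => ?_
  refine hx.mono fun n hxn => ?_
  obtain ⟨s, hs⟩ := exists_refinePart_mem (f := f) hP.2.2 n x
  have hcell := cellOf_eq_refinePart hP.2.1 hs
  rw [hBaddef] at hxn
  simp only [Set.mem_iUnion, not_exists] at hxn
  have := hxn s
  rw [Set.mem_inter_iff, not_and] at this
  have hnr := this hs
  simp only [Set.mem_setOf_eq, not_forall] at hnr
  obtain ⟨k, hk1, hk2, hk3⟩ := hnr
  push_neg at hk3
  refine ⟨k, hk1, ?_, by rw [hcell]; exact hk3⟩
  rw [hcell]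
  calc (k : ℝ) ≤ (⌊Real.exp (n * δ) / (μ (refinePart f P n s)).toReal⌋₊ : ℝ) := by
        exact_mod_cast hk2
    _ ≤ Real.exp (n * δ) / (μ (refinePart f P n s)).toReal :=
        Nat.floor_le (by positivity)

/-- The index embedding of blocks. -/
def embIdx {q k : ℕ} (hk : 0 < k) (i : Fin q) (j : Fin k) : Fin (q * k) :=
  ⟨k * (i : ℕ) + (j : ℕ), by
    calc k * (i : ℕ) + (j : ℕ) < k * (i : ℕ) + k := by omega
      _ = k * ((i : ℕ) + 1) := by ring
      _ ≤ k * q := Nat.mul_le_mul_left k (by omega)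
      _ = q * k := Nat.mul_comm k q⟩

/-- Grouping a `q*k`-itinerary into `q` blocks of length `k` is a bijection. -/
def blockEquiv {m q k : ℕ} (hk : 0 < k) :
    (Fin (q * k) → Fin m) ≃ (Fin q → Fin k → Fin m) where
  toFun s := fun i j => s (embIdx hk i j)
  invFun p := fun a => p ⟨(a : ℕ) / k, by
      rw [Nat.div_lt_iff_lt_mul hk]; exact a.2⟩
    ⟨(a : ℕ) % k, Nat.mod_lt _ hk⟩
  left_inv s := funext fun a => congrArg s (Fin.ext (Nat.div_add_mod _ _))
  right_inv p := by
    funext i j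
    have h1 : ((embIdx hk i j : Fin (q * k)) : ℕ) / k = (i : ℕ) := by
      show (k * (i : ℕ) + (j : ℕ)) / k = (i : ℕ)
      rw [Nat.mul_add_div hk, Nat.div_eq_of_lt j.2, Nat.add_zero]
    have h2 : ((embIdx hk i j : Fin (q * k)) : ℕ) % k = (j : ℕ) := by
      show (k * (i : ℕ) + (j : ℕ)) % k = (j : ℕ)
      rw [Nat.mul_add_mod, Nat.mod_eq_of_lt j.2]
    have e1 : (⟨((embIdx hk i j : Fin (q * k)) : ℕ) / k, by
        rw [Nat.div_lt_iff_lt_mul hk]; exact (embIdx hk i j).2⟩ : Fin q) = i :=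
      Fin.ext h1
    have e2 : (⟨((embIdx hk i j : Fin (q * k)) : ℕ) % k, Nat.mod_lt _ hk⟩ : Fin k) = j :=
      Fin.ext h2
    show p _ _ = p i j
    rw [e1, e2]

/-- Barron-type comparison of the cell measure with a product of block measures (Bad2). -/
lemma lemD [IsProbabilityMeasure μ] (hP : IsFinPartition P) (hfm : Measurable f)
    {δ : ℝ} (hδ : 0 < δ) {k : ℕ} (hk : 1 ≤ k) :
    ∀ᵐ x ∂μ, ∀ᶠ q : ℕ in atTop,
      Real.exp (-((q * k : ℕ) : ℝ) * δ) *
        ∏ i : Fin q, (μ (cellOf f P k (f^[k * (i : ℕ)] x))).toReal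
      ≤ (μ (cellOf f P (q * k) x)).toReal := by
  classical
  have hk0 : 0 < k := hk
  set Bad : ℕ → Set X := fun q => ⋃ s : Fin (q * k) → Fin m,
    (refinePart f P (q * k) s ∩
      (if (μ (refinePart f P (q * k) s)).toReal <
          Real.exp (-((q * k : ℕ) : ℝ) * δ) *
            ∏ i : Fin q, (μ (refinePart f P k (fun j => s (embIdx hk0 i j)))).toReal
        then (univ : Set X) else ∅)) with hBaddef
  have hbound : ∀ q, μ (Bad q) ≤ ENNReal.ofReal (Real.exp (-((q * k : ℕ) : ℝ) * δ)) := by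
    intro q
    set w : (Fin (q * k) → Fin m) → ℝ := fun s =>
      ∏ i : Fin q, (μ (refinePart f P k (fun j => s (embIdx hk0 i j)))).toReal with hwdef
    have hw0 : ∀ s, 0 ≤ w s := fun s =>
      Finset.prod_nonneg fun i _ => ENNReal.toReal_nonneg
    have hterm : ∀ s : Fin (q * k) → Fin m,
        μ (refinePart f P (q * k) s ∩
          (if (μ (refinePart f P (q * k) s)).toReal <
              Real.exp (-((q * k : ℕ) : ℝ) * δ) * w s then (univ : Set X) else ∅))
        ≤ ENNReal.ofReal (Real.exp (-((q * k : ℕ) : ℝ) * δ) * w s) := by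
      intro s
      by_cases hc : (μ (refinePart f P (q * k) s)).toReal <
          Real.exp (-((q * k : ℕ) : ℝ) * δ) * w s
      · rw [if_pos hc, Set.inter_univ]
        rw [← ENNReal.ofReal_toReal (measure_ne_top μ (refinePart f P (q * k) s))]
        exact ENNReal.ofReal_le_ofReal hc.le
      · rw [if_neg hc, Set.inter_empty]
        simp
    have hwsum : ∑ s : Fin (q * k) → Fin m, w s = 1 := by
      have := Fintype.sum_equiv (blockEquiv (m := m) (q := q) hk0)
        (fun s => w s)
        (fun p => ∏ i : Fin q, (μ (refinePart f P k (p i))).toReal)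
        (fun s => rfl)
      rw [this]
      rw [← Fintype.sum_pow (fun t : Fin k → Fin m => (μ (refinePart f P k t)).toReal) q]
      rw [sum_toReal_refinePart μ hP hfm k, one_pow]
    calc μ (Bad q) ≤ ∑ s : Fin (q * k) → Fin m,
        μ (refinePart f P (q * k) s ∩
          (if (μ (refinePart f P (q * k) s)).toReal <
              Real.exp (-((q * k : ℕ) : ℝ) * δ) * w s then (univ : Set X) else ∅)) := by
          rw [← tsum_fintype (L := .unconditional _)]
          exact measure_iUnion_le _
      _ ≤ ∑ s : Fin (q * k) → Fin m,
          ENNReal.ofReal (Real.exp (-((q * k : ℕ) : ℝ) * δ) * w s) :=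
          Finset.sum_le_sum fun s _ => hterm s
      _ = ENNReal.ofReal (∑ s : Fin (q * k) → Fin m,
          Real.exp (-((q * k : ℕ) : ℝ) * δ) * w s) :=
          (ENNReal.ofReal_sum_of_nonneg fun s _ =>
            mul_nonneg (Real.exp_nonneg _) (hw0 s)).symm
      _ = ENNReal.ofReal (Real.exp (-((q * k : ℕ) : ℝ) * δ)) := by
          rw [← Finset.mul_sum, hwsum, mul_one]
  have hgeom : (∑' q : ℕ, ENNReal.ofReal (Real.exp (-((q * k : ℕ) : ℝ) * δ))) ≠ ∞ := by
    have hform : (fun q : ℕ => ENNReal.ofReal (Real.exp (-((q * k : ℕ) : ℝ) * δ)))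
        = fun q : ℕ => (ENNReal.ofReal (Real.exp (-((k : ℝ) * δ)))) ^ q := by
      funext q
      rw [← ENNReal.ofReal_pow (Real.exp_nonneg _), ← Real.exp_nat_mul]
      push_cast
      ring_nf
    rw [hform, ENNReal.tsum_geometric]
    refine ENNReal.inv_ne_top.2 fun h0 => ?_
    rw [tsub_eq_zero_iff_le] at h0
    have hkd : (0:ℝ) < (k : ℝ) * δ := by
      have : (1:ℝ) ≤ (k : ℝ) := by exact_mod_cast hk
      nlinarith
    have : ENNReal.ofReal (Real.exp (-((k : ℝ) * δ))) < 1 := by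
      rw [← ENNReal.ofReal_one]
      refine ENNReal.ofReal_lt_ofReal_iff_of_nonneg (Real.exp_nonneg _) |>.2 ?_
      rw [← Real.exp_zero]
      exact Real.exp_lt_exp.2 (by linarith)
    exact absurd h0 (not_le.2 this)
  have hsum : (∑' q, μ (Bad q)) ≠ ∞ :=
    ne_top_of_le_ne_top hgeom (ENNReal.tsum_le_tsum hbound)
  have hBC := MeasureTheory.ae_eventually_notMem hsum
  refine hBC.mono fun x hx => ?_
  refine hx.mono fun q hxq => ?_
  obtain ⟨s, hs⟩ := exists_refinePart_mem (f := f) hP.2.2 (q * k) x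
  have hcell : cellOf f P (q * k) x = refinePart f P (q * k) s :=
    cellOf_eq_refinePart hP.2.1 hs
  have hblock : ∀ i : Fin q, cellOf f P k (f^[k * (i : ℕ)] x)
      = refinePart f P k (fun j => s (embIdx hk0 i j)) := by
    intro i
    refine cellOf_eq_refinePart hP.2.1 ?_
    rw [mem_refinePart]
    intro j
    have := (mem_refinePart.1 hs) (embIdx hk0 i j)
    rw [← Function.iterate_add_apply]
    show f^[(j : ℕ) + k * (i : ℕ)] x ∈ P (s (embIdx hk0 i j))
    rw [Nat.add_comm]
    exact this
  rw [hBaddef] at hxq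
  simp only [Set.mem_iUnion, not_exists] at hxq
  have hxs := hxq s
  rw [Set.mem_inter_iff, not_and] at hxs
  have := hxs hs
  by_cases hc : (μ (refinePart f P (q * k) s)).toReal <
      Real.exp (-((q * k : ℕ) : ℝ) * δ) *
        ∏ i : Fin q, (μ (refinePart f P k (fun j => s (embIdx hk0 i j)))).toReal
  · rw [if_pos hc] at this
    exact absurd (Set.mem_univ x) this
  · rw [hcell]
    push_neg at hc
    refine le_trans (le_of_eq ?_) hc
    congr 1
    exact Finset.prod_congr rfl fun i _ => by rw [hblock i]

set_option maxHeartbeats 1000000 in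
/-- The Ornstein–Weiss/SMB-type upper bound for the information of cells (lemE). -/
lemma lemE [IsProbabilityMeasure μ] (herg : Ergodic f μ) (hfm : Measurable f)
    (hP : IsFinPartition P) {δ : ℝ} (hδ : 0 < δ) {k : ℕ} (hk : 1 ≤ k) :
    ∀ᵐ x ∂μ, Filter.atTop.limsup (fun n : ℕ => ENNReal.ofReal (Fcell μ f P n x / n))
      ≤ ENNReal.ofReal (entH μ (refinePart f P k) / k + 3 * δ) := by
  classical
  have hpres : MeasurePreserving f μ μ := herg.toMeasurePreserving
  have hk0 : 0 < k := hk
  set Hk := entH μ (refinePart f P k) with hHkdef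
  have hHk : 0 ≤ Hk := entH_nonneg _
  have hHkk : 0 ≤ Hk / k := div_nonneg hHk (by positivity)
  set u : ℕ → X → ℝ≥0∞ := fun n x => ENNReal.ofReal (Fcell μ f P n x / n) with hudef
  set hstar : X → ℝ≥0∞ := fun x => Filter.atTop.limsup (fun n : ℕ => u n x) with hstardef
  have humeas : ∀ n, Measurable (u n) := fun n =>
    ((Fcell_measurable hP hfm n).div_const _).ennreal_ofReal
  have hstarmeas : Measurable hstar := Measurable.limsup humeas
  set c : ℝ≥0∞ := ENNReal.ofReal (Hk / k + 3 * δ) with hcdef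
  set A : Set X := {x | c < hstar x} with hAdef
  have hAmeas : MeasurableSet A := measurableSet_lt measurable_const hstarmeas
  -- monotonicity of hstar along the orbit
  have hmono : ∀ x : X, (∀ n : ℕ, μ (cellOf f P n x) ≠ 0) → hstar (f x) ≤ hstar x := by
    intro x hpos
    have hF : ∀ n : ℕ, Fcell μ f P n (f x) ≤ Fcell μ f P (n + 1) x := by
      intro n
      have hsub : cellOf f P (n + 1) x ⊆ f ⁻¹' cellOf f P n (f x) := by
        have h := cellOf_add_subset (f := f) (P := P) 1 n x
        simpa [Function.iterate_one, Nat.add_comm] using h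
      have hle : μ (cellOf f P (n + 1) x) ≤ μ (cellOf f P n (f x)) := by
        refine le_trans (measure_mono hsub) ?_
        obtain ⟨s, hs⟩ := cellOf_is_refinePart (f := f) hP n (f x)
        rw [hs, hpres.measure_preimage (refinePart_measurable hP hfm s).nullMeasurableSet]
      have h1 : 0 < (μ (cellOf f P (n + 1) x)).toReal :=
        ENNReal.toReal_pos (hpos (n + 1)) (measure_ne_top μ _)
      have h2 : (μ (cellOf f P (n + 1) x)).toReal ≤ (μ (cellOf f P n (f x))).toReal :=
        ENNReal.toReal_mono (measure_ne_top μ _) hle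
      have := Real.log_le_log h1 h2
      simp only [Fcell]
      linarith
    have hr : ∀ r : ℝ, 1 < r → hstar (f x) ≤ ENNReal.ofReal r * hstar x := by
      intro r hr1
      have hev : ∀ᶠ n : ℕ in atTop, u n (f x) ≤ ENNReal.ofReal r * u (n + 1) x := by
        have htends : Tendsto (fun n : ℕ => 1 + 1 / (n : ℝ)) atTop (𝓝 1) := by
          have h0 := tendsto_one_div_atTop_nhds_zero_nat (𝕜 := ℝ)
          simpa using tendsto_const_nhds.add h0
        have hevr : ∀ᶠ n : ℕ in atTop, 1 + 1 / (n : ℝ) < r :=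
          htends.eventually (gt_mem_nhds hr1)
        filter_upwards [hevr, eventually_ge_atTop 1] with n hn hn1
        have hnpos : (0 : ℝ) < n := by exact_mod_cast hn1
        have hF0 : 0 ≤ Fcell μ f P (n + 1) x := Fcell_nonneg _ _
        have e0 : Fcell μ f P n (f x) / n ≤ Fcell μ f P (n + 1) x / n := by
          gcongr
          exact hF n
        have e1 : Fcell μ f P (n + 1) x / n
            = (((n : ℝ) + 1) / n) * (Fcell μ f P (n + 1) x / ((n : ℝ) + 1)) := by
          field_simp
        have e2 : ((n : ℝ) + 1) / n ≤ r := by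
          rw [div_le_iff₀ hnpos]
          have : 1 + 1 / (n : ℝ) ≤ r := hn.le
          calc (n : ℝ) + 1 = (1 + 1 / n) * n := by field_simp
            _ ≤ r * n := by gcongr
        calc u n (f x) ≤ ENNReal.ofReal (Fcell μ f P (n + 1) x / n) :=
              ENNReal.ofReal_le_ofReal e0
          _ = ENNReal.ofReal ((((n : ℝ) + 1) / n) * (Fcell μ f P (n + 1) x / ((n : ℝ) + 1))) := by
              rw [← e1]
          _ = ENNReal.ofReal (((n : ℝ) + 1) / n)
              * ENNReal.ofReal (Fcell μ f P (n + 1) x / ((n : ℝ) + 1)) :=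
              ENNReal.ofReal_mul (by positivity)
          _ ≤ ENNReal.ofReal r * u (n + 1) x := by
              refine mul_le_mul' (ENNReal.ofReal_le_ofReal e2) ?_
              rw [hudef]
              push_cast
              exact le_refl _
      calc hstar (f x) ≤ Filter.atTop.limsup (fun n => ENNReal.ofReal r * u (n + 1) x) :=
            limsup_le_limsup hev
        _ = ENNReal.ofReal r * Filter.atTop.limsup (fun n => u (n + 1) x) :=
            ENNReal.limsup_const_mul_of_ne_top ENNReal.ofReal_ne_top
        _ = ENNReal.ofReal r * hstar x := by
            rw [Filter.limsup_nat_add (fun n => u n x) 1]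
    have htend2 : Tendsto (fun j : ℕ => ENNReal.ofReal (1 + 1 / ((j : ℝ) + 1)) * hstar x)
        atTop (𝓝 (hstar x)) := by
      have h1 : Tendsto (fun j : ℕ => (1 : ℝ) + 1 / ((j : ℝ) + 1)) atTop (𝓝 1) := by
        have h0 := tendsto_one_div_add_atTop_nhds_zero_nat (𝕜 := ℝ)
        simpa using tendsto_const_nhds.add h0
      have h2 : Tendsto (fun j : ℕ => ENNReal.ofReal (1 + 1 / ((j : ℝ) + 1))) atTop
          (𝓝 (ENNReal.ofReal 1)) := (ENNReal.continuous_ofReal.tendsto 1).comp h1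
      rw [ENNReal.ofReal_one] at h2
      have h3 := ENNReal.Tendsto.mul_const (b := hstar x) h2 (Or.inl one_ne_zero)
      simpa using h3
    refine ge_of_tendsto htend2 (Filter.Eventually.of_forall fun j => ?_)
    refine hr _ ?_
    have : (0 : ℝ) < 1 / ((j : ℝ) + 1) := by positivity
    linarith
  -- ergodic dichotomy
  have hinv : ∀ᵐ x ∂μ, x ∈ f ⁻¹' A → x ∈ A := by
    filter_upwards [lemB hP hfm] with x hpos hfx
    exact lt_of_lt_of_le hfx (hmono x hpos)
  have hle : f ⁻¹' A ≤ᵐ[μ] A := by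
    rw [MeasureTheory.ae_le_set]
    rw [MeasureTheory.ae_iff] at hinv
    refine measure_mono_null (fun x hx => ?_) hinv
    simp only [Set.mem_setOf_eq, Classical.not_imp]
    exact ⟨hx.1, hx.2⟩
  rcases herg.ae_empty_or_univ_of_preimage_ae_le' hAmeas.nullMeasurableSet hle
      (measure_ne_top μ A) with hA0 | hA1
  · have hμA : μ A = 0 := by
      rw [measure_congr hA0]
      simp
    refine (measure_eq_zero_iff_ae_notMem.1 hμA).mono fun x hx => ?_
    exact not_lt.1 hx
  · -- A is conull : contradiction via the maximal ergodic lemma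
    exfalso
    have hAae : ∀ᵐ x ∂μ, x ∈ A := by
      have h0 : μ Aᶜ = 0 := MeasureTheory.ae_eq_univ.1 hA1
      have := measure_eq_zero_iff_ae_notMem.1 h0
      exact this.mono fun x hx => by simpa using hx
    set G : X → ℝ := fun y => Fcell μ f P k y - (Hk + k * δ) with hGdef
    have hGmeas : Measurable G := (Fcell_measurable hP hfm k).sub measurable_const
    set B : ℝ := ∑ s : Fin k → Fin m, |Real.log (μ (refinePart f P k s)).toReal| with hBdef
    have hGbound : ∀ y, |G y| ≤ B + |Hk + k * δ| := by
      intro y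
      calc |G y| ≤ |Fcell μ f P k y| + |Hk + k * δ| := abs_sub _ _
        _ ≤ B + |Hk + k * δ| := by
            have := Fcell_bounded (μ := μ) (f := f) hP k y
            linarith
    have hT : MeasurePreserving f^[k] μ μ := hpres.iterate k
    have hae : ∀ᵐ y ∂μ, ∃ q, 1 ≤ q ∧ 0 < birkSum f^[k] G q y := by
      filter_upwards [hAae, lemB hP hfm, lemD hP hfm hδ hk] with y hyA hypos hyD
      have hfreq : ∃ᶠ n in atTop, c < u n y := frequently_lt_of_lt_limsup (h := hyA)
      obtain ⟨Q₀, hQ₀⟩ := eventually_atTop.1 hyD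
      set N₁ : ℕ := max (k * Q₀) (max 1 (2 * k + ⌈Hk / δ⌉₊)) with hN₁
      obtain ⟨n, hnfreq, hnN⟩ := (hfreq.and_eventually (eventually_ge_atTop N₁)).exists
      have hn1 : 1 ≤ n := le_trans (le_trans (le_max_left 1 _) (le_max_right (k * Q₀) _)) hnN
      have hnQ : k * Q₀ ≤ n := le_trans (le_max_left _ _) hnN
      have hnH : 2 * k + ⌈Hk / δ⌉₊ ≤ n :=
        le_trans (le_trans (le_max_right 1 _) (le_max_right (k * Q₀) _)) hnN
      have hnpos : (0 : ℝ) < n := by exact_mod_cast hn1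
      have h3 : Hk / k + 3 * δ < Fcell μ f P n y / n := by
        have h0 : 0 ≤ Hk / k + 3 * δ := by linarith
        exact (ENNReal.ofReal_lt_ofReal_iff_of_nonneg h0).1 hnfreq
      set q : ℕ := n / k + 1 with hqdef
      have hq1 : 1 ≤ q := Nat.le_add_left 1 (n / k)
      have hqQ : Q₀ ≤ q := by
        have h0 : Q₀ ≤ n / k :=
          (Nat.le_div_iff_mul_le hk0).2 (by rw [Nat.mul_comm]; exact hnQ)
        exact le_trans h0 (Nat.le_succ _)
      have hnlt : n < q * k := by
        have h := Nat.div_add_mod n k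
        have hm := Nat.mod_lt n hk0
        calc n = k * (n / k) + n % k := h.symm
          _ < k * (n / k) + k := by omega
          _ = (n / k + 1) * k := by ring
      have hqk_le : q * k ≤ n + k := by
        have := Nat.div_mul_le_self n k
        calc q * k = n / k * k + k := by ring
          _ ≤ n + k := by omega
      -- positivity of block measures
      have hμqk : 0 < (μ (cellOf f P (q * k) y)).toReal :=
        ENNReal.toReal_pos (hypos _) (measure_ne_top _ _)
      have hwpos : ∀ i : Fin q, 0 < (μ (cellOf f P k (f^[k * (i : ℕ)] y))).toReal := by
        intro i
        have hik : k * (i : ℕ) + k ≤ q * k := by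
          have : (i : ℕ) + 1 ≤ q := i.2
          calc k * (i : ℕ) + k = k * ((i : ℕ) + 1) := by ring
            _ ≤ k * q := Nat.mul_le_mul_left k this
            _ = q * k := Nat.mul_comm k q
        have hsub : cellOf f P (q * k) y ⊆ f^[k * (i : ℕ)] ⁻¹' cellOf f P k (f^[k * (i : ℕ)] y) :=
          (cellOf_anti hik y).trans (cellOf_add_subset _ _ y)
        obtain ⟨s', hs'⟩ := cellOf_is_refinePart (f := f) hP k (f^[k * (i : ℕ)] y)
        have hμle : μ (cellOf f P (q * k) y) ≤ μ (cellOf f P k (f^[k * (i : ℕ)] y)) := by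
          refine le_trans (measure_mono hsub) ?_
          rw [hs', (hpres.iterate (k * (i : ℕ))).measure_preimage
            (refinePart_measurable hP hfm s').nullMeasurableSet]
        refine ENNReal.toReal_pos (fun h0 => ?_) (measure_ne_top _ _)
        exact hypos (q * k) (le_antisymm (h0 ▸ hμle) (zero_le))
      have hprodpos : 0 < ∏ i : Fin q, (μ (cellOf f P k (f^[k * (i : ℕ)] y))).toReal :=
        Finset.prod_pos fun i _ => hwpos i
      have hDq := hQ₀ q hqQ
      -- take logs in hDq
      have hFqk : Fcell μ f P (q * k) y
          ≤ (q : ℝ) * k * δ + ∑ i : Fin q, Fcell μ f P k (f^[k * (i : ℕ)] y) := by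
        have hlog := Real.log_le_log (mul_pos (Real.exp_pos _) hprodpos) hDq
        rw [Real.log_mul (ne_of_gt (Real.exp_pos _)) (ne_of_gt hprodpos), Real.log_exp,
          Real.log_prod (fun i _ => ne_of_gt (hwpos i))] at hlog
        have hcast : ((q * k : ℕ) : ℝ) = (q : ℝ) * k := by push_cast; ring
        rw [hcast] at hlog
        have hsn : ∑ i : Fin q, Fcell μ f P k (f^[k * (i : ℕ)] y)
            = -∑ i : Fin q, Real.log (μ (cellOf f P k (f^[k * (i : ℕ)] y))).toReal := by
          rw [← Finset.sum_neg_distrib]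
          rfl
        rw [hsn]
        simp only [Fcell]
        linarith
      have hmono2 : Fcell μ f P n y ≤ Fcell μ f P (q * k) y := by
        have hμle : μ (cellOf f P (q * k) y) ≤ μ (cellOf f P n y) :=
          measure_mono (cellOf_anti hnlt.le y)
        have := Real.log_le_log hμqk (ENNReal.toReal_mono (measure_ne_top μ _) hμle)
        simp only [Fcell]
        linarith
      have h3' : (n : ℝ) * (Hk / k) + 3 * n * δ < Fcell μ f P n y := by
        have := (lt_div_iff₀ hnpos).1 h3
        nlinarith
      refine ⟨q, hq1, ?_⟩
      have hbs : birkSum f^[k] G q y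
          = (∑ i : Fin q, Fcell μ f P k (f^[k * (i : ℕ)] y)) - q * (Hk + k * δ) := by
        rw [birkSum]
        have hit : ∀ i : ℕ, (f^[k])^[i] y = f^[k * i] y := fun i => by
          rw [← Function.iterate_mul]
        have : ∀ i ∈ Finset.range q, G ((f^[k])^[i] y)
            = Fcell μ f P k (f^[k * i] y) - (Hk + k * δ) := by
          intro i _
          rw [hGdef, hit i]
        rw [Finset.sum_congr rfl this, Finset.sum_sub_distrib, Finset.sum_const,
          Finset.card_range, ← Fin.sum_univ_eq_sum_range
            (fun i => Fcell μ f P k (f^[k * i] y)) q]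
        simp only [nsmul_eq_mul]
      rw [hbs]
      -- final arithmetic
      have e4 : (q : ℝ) * k ≤ (n : ℝ) + k := by exact_mod_cast hqk_le
      have hkR : (1 : ℝ) ≤ (k : ℝ) := by exact_mod_cast hk
      have hE6 : Hk ≤ ((n : ℝ) - 2 * k) * δ := by
        have h1 : Hk / δ ≤ (⌈Hk / δ⌉₊ : ℝ) := Nat.le_ceil _
        have h2 : (2 * k + ⌈Hk / δ⌉₊ : ℕ) ≤ n := hnH
        have h2' : 2 * (k : ℝ) + (⌈Hk / δ⌉₊ : ℝ) ≤ (n : ℝ) := by exact_mod_cast h2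
        rw [div_le_iff₀ hδ] at h1
        nlinarith
      have p1 : ((q : ℝ) * k) * (Hk / k) ≤ ((n : ℝ) + k) * (Hk / k) :=
        mul_le_mul_of_nonneg_right e4 hHkk
      have p2 : ((q : ℝ) * k) * δ ≤ ((n : ℝ) + k) * δ :=
        mul_le_mul_of_nonneg_right e4 hδ.le
      have p3 : (k : ℝ) * (Hk / k) = Hk := by
        field_simp
      have p4 : (q : ℝ) * (Hk + k * δ) = ((q : ℝ) * k) * (Hk / k) + ((q : ℝ) * k) * δ := by
        field_simp
      linarith [hFqk, hmono2, h3', p1, p2, p3, p4, hE6]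
    have hint := maximal_ergodic G hT hGmeas hGbound hae
    rw [hGdef] at hint
    rw [integral_sub (Fcell_integrable hP hfm k) (integrable_const _),
      integral_Fcell hP hfm k, integral_const] at hint
    simp only [measure_univ, ENNReal.toReal_one, smul_eq_mul, one_mul, probReal_univ] at hint
    have : (0:ℝ) < (k : ℝ) * δ := by
      have : (1:ℝ) ≤ (k:ℝ) := by exact_mod_cast hk
      nlinarith
    rw [hHkdef] at hint
    linarith

end MainAux

/-- Existence of a finite measurable partition with small cells. -/
lemma exists_partition {X : Type*} [MetricSpace X] [CompactSpace X] [MeasurableSpace X]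
    [BorelSpace X] {ε : ℝ} (hε : 0 < ε) :
    ∃ (m : ℕ) (P : Fin m → Set X), IsFinPartition P ∧
      ∀ i, ∀ x ∈ P i, ∀ y ∈ P i, dist x y < ε := by
  classical
  obtain ⟨t, ht⟩ := isCompact_univ.elim_finite_subcover (fun c : X => ball c (ε / 3))
    (fun c => isOpen_ball) (fun x _ => Set.mem_iUnion.2 ⟨x, mem_ball_self (by linarith)⟩)
  set mm := t.card with hmm
  set e := t.equivFin with hedef
  set cc : Fin mm → X := fun i => (e.symm i : X) with hccdef
  refine ⟨mm, fun i => ball (cc i) (ε / 3) \ ⋃ (j : Fin mm) (_ : j < i), ball (cc j) (ε / 3),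
    ⟨?_, ?_, ?_⟩, ?_⟩
  · intro i
    exact measurableSet_ball.diff (MeasurableSet.iUnion fun j =>
      MeasurableSet.iUnion fun _ => measurableSet_ball)
  · have key : ∀ i j : Fin mm, i < j →
        Disjoint (ball (cc i) (ε / 3) \ ⋃ (j' : Fin mm) (_ : j' < i), ball (cc j') (ε / 3))
          (ball (cc j) (ε / 3) \ ⋃ (j' : Fin mm) (_ : j' < j), ball (cc j') (ε / 3)) := by
      intro i j hij
      refine Set.disjoint_left.2 fun x hxi hxj => ?_
      exact hxj.2 (Set.mem_iUnion.2 ⟨i, Set.mem_iUnion.2 ⟨hij, hxi.1⟩⟩)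
    intro i j hij
    rcases lt_or_gt_of_ne hij with h | h
    · exact key i j h
    · exact (key j i h).symm
  · refine Set.eq_univ_of_forall fun x => ?_
    have hx := ht (Set.mem_univ x)
    simp only [Set.mem_iUnion] at hx
    obtain ⟨a, ha, hxa⟩ := hx
    have hful : (Finset.univ.filter fun i : Fin mm => x ∈ ball (cc i) (ε / 3)).Nonempty := by
      refine ⟨e ⟨a, ha⟩, ?_⟩
      simp only [Finset.mem_filter, Finset.mem_univ, true_and]
      rw [hccdef]
      simpa [Equiv.symm_apply_apply] using hxa
    set i₀ := (Finset.univ.filter fun i : Fin mm => x ∈ ball (cc i) (ε / 3)).min' hful with hi₀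
    have hi₀mem : x ∈ ball (cc i₀) (ε / 3) := by
      have := (Finset.univ.filter fun i : Fin mm => x ∈ ball (cc i) (ε / 3)).min'_mem hful
      rw [← hi₀] at this
      simpa using this
    refine Set.mem_iUnion.2 ⟨i₀, hi₀mem, fun hbad => ?_⟩
    simp only [Set.mem_iUnion] at hbad
    obtain ⟨j, hj, hxj⟩ := hbad
    have : i₀ ≤ j := by
      refine Finset.min'_le _ _ ?_
      simp only [Finset.mem_filter, Finset.mem_univ, true_and]
      exact hxj
    exact absurd this (not_le.2 hj)
  · intro i x hx y hy
    have h1 : dist x (cc i) < ε / 3 := mem_ball.1 hx.1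
    have h2 : dist y (cc i) < ε / 3 := mem_ball.1 hy.1
    calc dist x y ≤ dist x (cc i) + dist y (cc i) := dist_triangle_right x y (cc i)
      _ < ε / 3 + ε / 3 := by linarith
      _ < ε := by linarith

end OWAux

open OWAux

/-- For every `ε > 0` and `μ`-a.e. `x`, `limsup_{n→∞} (1/n) log R_n(x,ε) ≤ h_μ(f)`
(in particular the return times `R_n(x,ε)` are finite a.e.). -/
theorem stmt_1 {X : Type*} [MetricSpace X] [CompactSpace X] [MeasurableSpace X] [BorelSpace X]
    (f : X → X) (hf : Continuous f) (μ : Measure X) [IsProbabilityMeasure μ]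
    (herg : Ergodic f μ) :
    ∀ ε > (0:ℝ), ∀ᵐ x ∂μ,
      (∀ n : ℕ, {k : ℕ | 1 ≤ k ∧ f^[k] x ∈ dynBall f x n ε}.Nonempty) ∧
      recRateSup f x ε ≤ metricEntropy μ f := by
  intro ε hε
  have hfm : Measurable f := hf.measurable
  have hpres : MeasurePreserving f μ μ := herg.toMeasurePreserving
  obtain ⟨m, P, hP, hdiam⟩ := exists_partition (X := X) hε
  -- cells are contained in dynamical balls
  have hcd : ∀ (n : ℕ) (x : X), cellOf f P n x ⊆ dynBall f x n ε := by
    intro n x y hy j hj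
    have hx := mem_cellOf (f := f) hP.2.1 hP.2.2 n x
    simp only [cellOf, Set.mem_iInter, Set.mem_preimage] at hy hx
    obtain ⟨i, hi⟩ := exists_mem_part hP.2.2 (f^[j] x)
    have hpart := part0_eq hP.2.1 hi
    have h2 : f^[j] y ∈ P i := by
      have := hy ⟨j, hj⟩
      rw [hpart] at this
      exact this
    exact hdiam i _ hi _ h2
  -- the key quantitative bound, for each partition depth k and accuracy 1/(jj+1)
  have main : ∀ k : ℕ, 1 ≤ k → ∀ jj : ℕ, ∀ᵐ x ∂μ,
      recRateSup f x ε ≤ ENNReal.ofReal (entH μ (refinePart f P k) / k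
        + 5 * ((1 : ℝ) / ((jj : ℝ) + 1))) := by
    intro k hk jj
    set δ : ℝ := (1 : ℝ) / ((jj : ℝ) + 1) with hδdef
    have hδ : 0 < δ := by positivity
    have hHk : 0 ≤ entH μ (refinePart f P k) := entH_nonneg _
    have hHkk : 0 ≤ entH μ (refinePart f P k) / k := div_nonneg hHk (by positivity)
    filter_upwards [lemB hP hfm, lemC hpres hP hfm hδ, lemE herg hfm hP hδ hk]
      with x hB hC hE
    have hev1 : ∀ᶠ n : ℕ in atTop,
        Fcell μ f P n x / n < entH μ (refinePart f P k) / k + 4 * δ := by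
      have hlt : Filter.atTop.limsup (fun n : ℕ => ENNReal.ofReal (Fcell μ f P n x / n))
          < ENNReal.ofReal (entH μ (refinePart f P k) / k + 4 * δ) := by
        refine lt_of_le_of_lt hE ?_
        refine (ENNReal.ofReal_lt_ofReal_iff (by linarith)).2 (by linarith)
      refine (eventually_lt_of_limsup_lt hlt).mono fun n hn => ?_
      have h0 : 0 ≤ Fcell μ f P n x / n :=
        div_nonneg (Fcell_nonneg _ _) (Nat.cast_nonneg n)
      exact (ENNReal.ofReal_lt_ofReal_iff_of_nonneg h0).1 hn
    have hev2 : ∀ᶠ n : ℕ in atTop, ENNReal.ofReal (Real.log (retTime f x n ε) / n)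
        ≤ ENNReal.ofReal (entH μ (refinePart f P k) / k + 5 * δ) := by
      filter_upwards [hC, hev1, eventually_ge_atTop 1] with n hCn hev1n hn1
      obtain ⟨k₁, hk₁1, hk₁le, hk₁mem⟩ := hCn
      have hnpos : (0 : ℝ) < n := by exact_mod_cast hn1
      have hRmem : retTime f x n ε ∈ {k' : ℕ | 1 ≤ k' ∧ f^[k'] x ∈ dynBall f x n ε} :=
        Nat.sInf_mem ⟨k₁, hk₁1, hcd n x hk₁mem⟩
      have hRet : retTime f x n ε ≤ k₁ := Nat.sInf_le ⟨hk₁1, hcd n x hk₁mem⟩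
      have hRet1 : 1 ≤ retTime f x n ε := hRmem.1
      have hμpos : 0 < (μ (cellOf f P n x)).toReal :=
        ENNReal.toReal_pos (hB n) (measure_ne_top μ _)
      have hlog : Real.log (retTime f x n ε) ≤ n * δ + Fcell μ f P n x := by
        have hr0 : (0 : ℝ) < (retTime f x n ε : ℝ) := by exact_mod_cast hRet1
        have l1 : Real.log (retTime f x n ε) ≤ Real.log k₁ :=
          Real.log_le_log hr0 (by exact_mod_cast hRet)
        have l2 : Real.log (k₁ : ℝ)
            ≤ Real.log (Real.exp (n * δ) / (μ (cellOf f P n x)).toReal) :=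
          Real.log_le_log (by exact_mod_cast hk₁1) hk₁le
        have l3 : Real.log (Real.exp (n * δ) / (μ (cellOf f P n x)).toReal)
            = n * δ - Real.log (μ (cellOf f P n x)).toReal := by
          rw [Real.log_div (Real.exp_ne_zero _) (ne_of_gt hμpos), Real.log_exp]
        simp only [Fcell]
        linarith
      have hdiv : Real.log (retTime f x n ε) / n ≤ δ + Fcell μ f P n x / n := by
        have h1 : Real.log (retTime f x n ε) / n ≤ (n * δ + Fcell μ f P n x) / n := by
          gcongr
        have h2 : ((n : ℝ) * δ + Fcell μ f P n x) / n = δ + Fcell μ f P n x / n := by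
          field_simp
        linarith [h1, h2.le, h2.ge]
      exact ENNReal.ofReal_le_ofReal (by linarith)
    exact limsup_le_of_le (h := hev2)
  have hmain : ∀ᵐ x ∂μ, ∀ k : ℕ, ∀ jj : ℕ, 1 ≤ k →
      recRateSup f x ε ≤ ENNReal.ofReal (entH μ (refinePart f P k) / k
        + 5 * ((1 : ℝ) / ((jj : ℝ) + 1))) := by
    rw [MeasureTheory.ae_all_iff]
    intro k
    rw [MeasureTheory.ae_all_iff]
    intro jj
    by_cases hk : 1 ≤ k
    · exact (main k hk jj).mono fun x h _ => h
    · exact Filter.Eventually.of_forall fun x hcontra => absurd hcontra hk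
  filter_upwards [lemA hpres hP hfm, hmain] with x hA hM
  constructor
  · intro n
    obtain ⟨k, hk1, hk2⟩ := hA n
    exact ⟨k, hk1, hcd n x hk2⟩
  · have h1 : ∀ k : ℕ, 1 ≤ k →
        recRateSup f x ε ≤ ENNReal.ofReal (entH μ (refinePart f P k) / k) := by
      intro k hk
      have h0 := tendsto_one_div_add_atTop_nhds_zero_nat (𝕜 := ℝ)
      have ht0 : Tendsto (fun jj : ℕ => entH μ (refinePart f P k) / k
          + 5 * ((1 : ℝ) / ((jj : ℝ) + 1))) atTop (𝓝 (entH μ (refinePart f P k) / k)) := by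
        have := tendsto_const_nhds (x := entH μ (refinePart f P k) / (k : ℝ))
          (f := atTop (α := ℕ)) |>.add (h0.const_mul 5)
        simpa using this
      have htc : Tendsto (fun jj : ℕ => ENNReal.ofReal (entH μ (refinePart f P k) / k
          + 5 * ((1 : ℝ) / ((jj : ℝ) + 1)))) atTop
          (𝓝 (ENNReal.ofReal (entH μ (refinePart f P k) / k))) :=
        (ENNReal.continuous_ofReal.tendsto _).comp ht0
      exact ge_of_tendsto htc (Filter.Eventually.of_forall fun jj => hM k jj hk)
    have h2 : recRateSup f x ε ≤ partKS μ f P := by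
      refine le_liminf_of_le (h := ?_)
      filter_upwards [eventually_ge_atTop 1] with n hn
      exact h1 n hn
    refine h2.trans ?_
    show partKS μ f P ≤ ⨆ (m : ℕ) (P : Fin m → Set X) (_ : IsFinPartition P), partKS μ f P
    exact le_iSup_of_le m (le_iSup_of_le P (le_iSup_of_le hP le_rfl))

end
end

section
/- Let (X,d) be a compact metric space, f : X → X a continuous map, Q a finite measurable partition of X, and ε > 0. Let V_ε denote the ε-neighborhood of the boundary ∂Q = ⋃_{Q_i ∈ Q} ∂Q_i, and assume that B(z,ε) ⊆ Q(z) for every z ∉ V_ε, where Q(z) is the element of Q containing z and B(z,ε) is the open ball. Then for every α > 0 there exists γ > 0, depending only on α and the number of elements of Q, such that for every n ≥ 1 and every x ∈ X satisfying Σ_{j=0}^{n−1} 1_{V_ε}(f^j(x)) < γn, the dynamical ball B(x,n,ε) can be covered by at most e^{αn} elements of the partition Q^{(n)} = ⋁_{j=0}^{n−1} f^{-j}Q. -/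
open MeasureTheory Filter Set Metric Topology
open scoped ENNReal NNReal

noncomputable section

universe u

/-- **Combinatorial covering lemma.** For every `α > 0` there is `γ > 0`, depending only on
`α` and the number `m` of elements of the partition, such that: for any compact metric space,
continuous `f`, finite measurable partition `P` with `m` cells, and `ε > 0` for which the
`ε`-ball around any point outside the `ε`-neighbourhood `V_ε` of the boundary `∂P` is
contained in the cell of that point, every dynamical ball `B(x,n,ε)` centred at a point whose
first `n` iterates visit `V_ε` fewer than `γ n` times can be covered by at most `e^{α n}`
elements of `P^{(n)}`. -/
theorem stmt_13 (m : ℕ) (α : ℝ) (hα : 0 < α) :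
    ∃ γ : ℝ, 0 < γ ∧
      ∀ (X : Type u) [MetricSpace X] [CompactSpace X] [MeasurableSpace X] [BorelSpace X],
        ∀ (f : X → X), Continuous f →
        ∀ P : Fin m → Set X, IsFinPartition P →
        ∀ ε > (0:ℝ),
          (∀ z : X, z ∉ Metric.thickening ε (⋃ i, frontier (P i)) →
            ∀ i, z ∈ P i → Metric.ball z ε ⊆ P i) →
          ∀ n : ℕ, 1 ≤ n → ∀ x : X,
            (∑ j ∈ Finset.range n,
              Set.indicator (Metric.thickening ε (⋃ i, frontier (P i))) (fun _ => (1:ℝ))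
                (f^[j] x)) < γ * n →
            ∃ S : Finset (Fin n → Fin m), (S.card : ℝ) ≤ Real.exp (α * n) ∧
              dynBall f x n ε ⊆ ⋃ s ∈ S, refinePart f P n s := by
  classical
  have hlog : 0 < Real.log ((m : ℝ) + 2) := Real.log_pos (by
    have : (0:ℝ) ≤ (m : ℝ) := Nat.cast_nonneg m
    linarith)
  refine ⟨α / Real.log ((m : ℝ) + 2), div_pos hα hlog, ?_⟩
  intro X _ _ _ _ f hf P hP ε hε hball n hn x hx
  set V := Metric.thickening ε (⋃ i, frontier (P i)) with hV
  have hcov : ∀ z : X, ∃ i, z ∈ P i := by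
    intro z
    have hz : z ∈ ⋃ i, P i := hP.2.2 ▸ mem_univ z
    exact mem_iUnion.mp hz
  choose idx hidx using hcov
  have hm : 0 < m := (idx x).pos
  set bad : Finset (Fin n) := Finset.univ.filter (fun j => f^[(j : ℕ)] x ∈ V) with hbad
  -- the visit sum equals the cardinality of `bad`
  have hsum : (∑ j ∈ Finset.range n, Set.indicator V (fun _ => (1:ℝ)) (f^[j] x))
      = (bad.card : ℝ) := by
    rw [hbad, Finset.card_filter, ← Fin.sum_univ_eq_sum_range
      (fun j => Set.indicator V (fun _ => (1:ℝ)) (f^[j] x)) n]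
    push_cast
    refine Finset.sum_congr rfl fun j _ => ?_
    by_cases hj : f^[(j : ℕ)] x ∈ V <;> simp [Set.indicator_apply, hj]
  rw [hsum] at hx
  set S : Finset (Fin n → Fin m) :=
    Finset.univ.filter (fun s => ∀ j, j ∉ bad → s j = idx (f^[(j : ℕ)] x)) with hS
  refine ⟨S, ?_, ?_⟩
  · -- cardinality bound
    have hcard : S.card ≤ m ^ bad.card := by
      have h1 : S.card ≤ Fintype.card ({j // j ∈ bad} → Fin m) := by
        classical
        rw [← Finset.card_univ]
        apply Finset.card_le_card_of_injOn (fun s (j : {j // j ∈ bad}) => s j.1)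
          (fun s _ => Finset.mem_univ _)
        intro s hs t ht hst
        funext j
        by_cases hj : j ∈ bad
        · exact congrFun hst ⟨j, hj⟩
        · rw [(Finset.mem_filter.mp hs).2 j hj, (Finset.mem_filter.mp ht).2 j hj]
      simpa [Fintype.card_fun, Fintype.card_coe] using h1
    have hcardR : (S.card : ℝ) ≤ ((m : ℝ)) ^ bad.card := by
      calc (S.card : ℝ) ≤ ((m ^ bad.card : ℕ) : ℝ) := Nat.cast_le.mpr hcard
      _ = (m : ℝ) ^ bad.card := by push_cast; ring
    refine hcardR.trans ?_
    have hmpos : (0:ℝ) < (m : ℝ) := by exact_mod_cast hm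
    have hpow : (m : ℝ) ^ bad.card = Real.exp ((bad.card : ℝ) * Real.log (m : ℝ)) := by
      rw [← Real.exp_log (pow_pos hmpos _), Real.log_pow]
    rw [hpow]
    apply Real.exp_le_exp.mpr
    have hlogm : Real.log (m : ℝ) ≤ Real.log ((m : ℝ) + 2) :=
      by gcongr; linarith
    have hlogm0 : 0 ≤ Real.log (m : ℝ) := Real.log_natCast_nonneg m
    have h2 : (bad.card : ℝ) * Real.log (m : ℝ)
        ≤ (bad.card : ℝ) * Real.log ((m : ℝ) + 2) :=
      mul_le_mul_of_nonneg_left hlogm (Nat.cast_nonneg _)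
    have h3 : (bad.card : ℝ) * Real.log ((m : ℝ) + 2)
        ≤ (α / Real.log ((m : ℝ) + 2) * n) * Real.log ((m : ℝ) + 2) :=
      mul_le_mul_of_nonneg_right hx.le hlog.le
    have h4 : (α / Real.log ((m : ℝ) + 2) * n) * Real.log ((m : ℝ) + 2) = α * n := by
      field_simp
    linarith
  · -- covering
    intro y hy
    set t : Fin n → Fin m := fun j => idx (f^[(j : ℕ)] y) with ht
    have htS : t ∈ S := by
      rw [hS, Finset.mem_filter]
      refine ⟨Finset.mem_univ _, fun j hj => ?_⟩
      have hxV : f^[(j : ℕ)] x ∉ V := by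
        intro hmem
        exact hj (Finset.mem_filter.mpr ⟨Finset.mem_univ _, hmem⟩)
      have hdist : f^[(j : ℕ)] y ∈ Metric.ball (f^[(j : ℕ)] x) ε := by
        rw [Metric.mem_ball, dist_comm]
        exact hy (j : ℕ) j.isLt
      have hyP : f^[(j : ℕ)] y ∈ P (idx (f^[(j : ℕ)] x)) :=
        hball _ hxV _ (hidx _) hdist
      by_contra hne
      have hdisj : Disjoint (P (t j)) (P (idx (f^[(j : ℕ)] x))) := hP.2.1 hne
      exact (Set.disjoint_left.mp hdisj (hidx _)) hyP
    refine mem_biUnion htS ?_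
    exact mem_iInter.mpr fun j => hidx _


end
end

section
/- Let (X,d) be a metric space and f : X → X a map for which there exist constants δ > 0 and 1 < λ ≤ Λ such that λ·d(x,y) ≤ d(f(x),f(y)) ≤ Λ·d(x,y) for all x,y ∈ X with d(x,y) < δ. Then for every x ∈ X, every n ≥ 1 and every ε with 0 < ε < δ, one has the inclusions B(x, εΛ^{−(n−1)}) ⊆ B(x,n,ε) ⊆ B(x, ελ^{−(n−1)}), where B(x,r) denotes the open ball of radius r. -/
open MeasureTheory Filter Set Metric Topology
open scoped ENNReal NNReal

noncomputable section

/-- If `λ d(x,y) ≤ d(f x, f y) ≤ Λ d(x,y)` whenever `d(x,y) < δ`, with `1 < λ ≤ Λ`, then for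
`0 < ε < δ` and `n ≥ 1` one has `B(x, ε Λ^{-(n-1)}) ⊆ B(x,n,ε) ⊆ B(x, ε λ^{-(n-1)})`. -/
theorem stmt_15 {X : Type*} [MetricSpace X] (f : X → X) (δ lam Lam : ℝ)
    (hδ : 0 < δ) (hlam : 1 < lam) (hlamLam : lam ≤ Lam)
    (hexp : ∀ x y : X, dist x y < δ →
      lam * dist x y ≤ dist (f x) (f y) ∧ dist (f x) (f y) ≤ Lam * dist x y) :
    ∀ (x : X) (n : ℕ), 1 ≤ n → ∀ ε : ℝ, 0 < ε → ε < δ →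
      Metric.ball x (ε / Lam ^ (n - 1)) ⊆ dynBall f x n ε ∧
      dynBall f x n ε ⊆ Metric.ball x (ε / lam ^ (n - 1)) := by
  intro x n hn ε hε hεδ
  have hLam : 1 < Lam := lt_of_lt_of_le hlam hlamLam
  have hLam0 : (0:ℝ) < Lam := by linarith
  have hlam0 : (0:ℝ) < lam := by linarith
  constructor
  · intro y hy
    rw [Metric.mem_ball, dist_comm] at hy
    have key : ∀ j, j ≤ n - 1 → dist (f^[j] x) (f^[j] y) < ε := by
      have bound : ∀ j, j ≤ n - 1 → dist (f^[j] x) (f^[j] y) ≤ Lam ^ j * dist x y := by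
        intro j
        induction j with
        | zero => intro _; simpa using le_refl (dist x y)
        | succ k ih =>
          intro hk
          have hk' : k ≤ n - 1 := Nat.le_of_succ_le hk
          have h1 := ih hk'
          have hpow : Lam ^ k ≤ Lam ^ (n - 1) := pow_le_pow_right₀ hLam.le hk'
          have hsmall : dist (f^[k] x) (f^[k] y) < δ := by
            calc dist (f^[k] x) (f^[k] y) ≤ Lam ^ k * dist x y := h1
              _ < Lam ^ k * (ε / Lam ^ (n - 1)) :=
                  mul_lt_mul_of_pos_left hy (pow_pos hLam0 k)
              _ ≤ Lam ^ (n - 1) * (ε / Lam ^ (n - 1)) := by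
                  apply mul_le_mul_of_nonneg_right hpow
                  positivity
              _ = ε := by
                  field_simp
              _ < δ := hεδ
          have h2 := (hexp _ _ hsmall).2
          rw [Function.iterate_succ_apply', Function.iterate_succ_apply']
          calc dist (f (f^[k] x)) (f (f^[k] y)) ≤ Lam * dist (f^[k] x) (f^[k] y) := h2
            _ ≤ Lam * (Lam ^ k * dist x y) := by
                apply mul_le_mul_of_nonneg_left h1 hLam0.le
            _ = Lam ^ (k + 1) * dist x y := by ring
      intro j hj
      have hpow : Lam ^ j ≤ Lam ^ (n - 1) := pow_le_pow_right₀ hLam.le hj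
      calc dist (f^[j] x) (f^[j] y) ≤ Lam ^ j * dist x y := bound j hj
        _ < Lam ^ j * (ε / Lam ^ (n - 1)) := mul_lt_mul_of_pos_left hy (pow_pos hLam0 j)
        _ ≤ Lam ^ (n - 1) * (ε / Lam ^ (n - 1)) := by
            apply mul_le_mul_of_nonneg_right hpow; positivity
        _ = ε := by field_simp
    intro j hj
    exact key j (Nat.le_sub_one_of_lt hj)
  · intro y hy
    have key : ∀ j, j ≤ n - 1 → lam ^ j * dist x y ≤ dist (f^[j] x) (f^[j] y) := by
      intro j
      induction j with
      | zero => intro _; simpa using le_refl (dist x y)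
      | succ k ih =>
        intro hk
        have hk' : k ≤ n - 1 := Nat.le_of_succ_le hk
        have h1 := ih hk'
        have hkn : k < n := lt_of_le_of_lt hk' (Nat.sub_lt (by omega) one_pos)
        have hsmall : dist (f^[k] x) (f^[k] y) < δ := lt_trans (hy k hkn) hεδ
        have h2 := (hexp _ _ hsmall).1
        rw [Function.iterate_succ_apply', Function.iterate_succ_apply']
        calc lam ^ (k + 1) * dist x y = lam * (lam ^ k * dist x y) := by ring
          _ ≤ lam * dist (f^[k] x) (f^[k] y) := by
              apply mul_le_mul_of_nonneg_left h1 hlam0.le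
          _ ≤ dist (f (f^[k] x)) (f (f^[k] y)) := h2
    rw [Metric.mem_ball, dist_comm]
    have hlast : dist (f^[n-1] x) (f^[n-1] y) < ε := hy (n - 1) (Nat.sub_lt (by omega) one_pos)
    have := lt_of_le_of_lt (key (n - 1) le_rfl) hlast
    rw [lt_div_iff₀ (pow_pos hlam0 (n - 1)), mul_comm]
    exact this

end
end

section
/- Let (X,d) be a compact metric space, f : X → X a continuous map, μ an ergodic f-invariant Borel probability measure, and φ : X → ℝ a continuous function. Set S_nφ(B(x,n,ε)) = sup{ Σ_{j=0}^{n−1} φ(f^j(y)) : y ∈ B(x,n,ε) }. Then for μ-almost every x ∈ X, lim_{ε→0} limsup_{n→∞} (1/n) S_nφ(B(x,n,ε)) = lim_{ε→0} liminf_{n→∞} (1/n) S_nφ(B(x,n,ε)) = ∫ φ dμ. -/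
open MeasureTheory Filter Set Metric Topology
open scoped ENNReal NNReal

noncomputable section

/-- The supremum `S_nφ(B(x,n,ε)) = sup {∑_{j<n} φ(f^j y) : y ∈ B(x,n,ε)}` of Birkhoff sums
over a dynamical ball. -/
def birkSup {X : Type*} [PseudoMetricSpace X] (f : X → X) (φ : X → ℝ) (x : X) (n : ℕ)
    (ε : ℝ) : ℝ :=
  sSup ((fun y => ∑ j ∈ Finset.range n, φ (f^[j] y)) '' dynBall f x n ε)

namespace Stmt16

/-! ### Limsup helper lemmas -/

lemma bdd_le_of_abs_le {u : ℕ → ℝ} {M : ℝ} (h : ∀ n, |u n| ≤ M) :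
    IsBoundedUnder (· ≤ ·) atTop u :=
  ⟨M, eventually_map.mpr (.of_forall fun n => (abs_le.mp (h n)).2)⟩

lemma bdd_ge_of_abs_le {u : ℕ → ℝ} {M : ℝ} (h : ∀ n, |u n| ≤ M) :
    IsBoundedUnder (· ≥ ·) atTop u :=
  ⟨-M, eventually_map.mpr (.of_forall fun n => (abs_le.mp (h n)).1)⟩

lemma limsup_le_limsup_of_tendsto_sub {u v : ℕ → ℝ}
    (hvb : IsBoundedUnder (· ≤ ·) atTop v) (hvl : IsBoundedUnder (· ≥ ·) atTop v)
    (hul : IsBoundedUnder (· ≥ ·) atTop u)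
    (h : Tendsto (fun n => u n - v n) atTop (𝓝 0)) :
    limsup u atTop ≤ limsup v atTop := by
  refine le_of_forall_pos_le_add fun ε hε => ?_
  have hev : ∀ᶠ n in atTop, u n ≤ v n + ε := by
    filter_upwards [NormedAddCommGroup.tendsto_nhds_zero.mp h ε hε] with n hn
    have h2 := (abs_lt.mp (by simpa [Real.norm_eq_abs] using hn)).2
    linarith
  have hvb' : IsBoundedUnder (· ≤ ·) atTop (fun n => v n + ε) := by
    obtain ⟨C, hC⟩ := hvb
    exact ⟨C + ε, eventually_map.mpr ((eventually_map.mp hC).mono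
      fun n hn => add_le_add_left hn ε)⟩
  calc limsup u atTop ≤ limsup (fun n => v n + ε) atTop :=
        limsup_le_limsup hev hul.isCoboundedUnder_le hvb'
    _ = limsup v atTop + ε := limsup_add_const atTop v ε hvb hvl.isCoboundedUnder_le

lemma limsup_eq_limsup_of_tendsto_sub {u v : ℕ → ℝ}
    (hub : IsBoundedUnder (· ≤ ·) atTop u) (hvb : IsBoundedUnder (· ≤ ·) atTop v)
    (hul : IsBoundedUnder (· ≥ ·) atTop u) (hvl : IsBoundedUnder (· ≥ ·) atTop v)
    (h : Tendsto (fun n => u n - v n) atTop (𝓝 0)) :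
    limsup u atTop = limsup v atTop :=
  le_antisymm (limsup_le_limsup_of_tendsto_sub hvb hvl hul h)
    (limsup_le_limsup_of_tendsto_sub hub hul hvl
      (by simpa [neg_sub] using h.neg))



variable {X : Type*} [MetricSpace X] [CompactSpace X] [MeasurableSpace X] [BorelSpace X]
variable {f : X → X} {μ : Measure X}

/-- The maximum of Birkhoff sums `S_k g`, `0 ≤ k ≤ N`. -/
def maxSum (f : X → X) (g : X → ℝ) (N : ℕ) (x : X) : ℝ :=
  (Finset.range (N + 1)).sup' Finset.nonempty_range_add_one fun k => birkhoffSum f g k x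

lemma continuous_birkhoffSum (hf : Continuous f) {g : X → ℝ} (hg : Continuous g) (n : ℕ) :
    Continuous fun x => birkhoffSum f g n x :=
  continuous_finset_sum _ fun k _ => hg.comp (hf.iterate k)

lemma continuous_maxSum (hf : Continuous f) {g : X → ℝ} (hg : Continuous g) (N : ℕ) :
    Continuous (maxSum f g N) :=
  continuous_iff_continuousAt.mpr fun _ =>
    ContinuousAt.finset_sup'_apply _ fun k _ => (continuous_birkhoffSum hf hg k).continuousAt

lemma integrable_of_cont [IsProbabilityMeasure μ] {g : X → ℝ} (hg : Continuous g) :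
    Integrable g μ :=
  integrableOn_univ.mp (hg.continuousOn.integrableOn_compact isCompact_univ)

lemma maxSum_nonneg (g : X → ℝ) (N : ℕ) (x : X) : 0 ≤ maxSum f g N x := by
  have h := Finset.le_sup' (fun k => birkhoffSum f g k x)
    (Finset.mem_range.mpr (Nat.succ_pos N))
  simp only [birkhoffSum_zero] at h; exact h

lemma maxSum_le_add {g : X → ℝ} {N : ℕ} {x : X} (hx : 0 < maxSum f g N x) :
    maxSum f g N x ≤ g x + maxSum f g N (f x) := by
  obtain ⟨k, hk, hEq⟩ := Finset.exists_mem_eq_sup' (Finset.nonempty_range_add_one (n := N))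
    (fun k => birkhoffSum f g k x)
  have hEq' : maxSum f g N x = birkhoffSum f g k x := hEq
  rw [hEq'] at hx ⊢
  match k, hk, hx with
  | 0, _, hx => simp [birkhoffSum_zero] at hx
  | (m+1), hk, _ =>
    rw [birkhoffSum_succ']
    have hm : m ∈ Finset.range (N+1) := Finset.mem_range.mpr
      (lt_of_le_of_lt (Nat.le_succ m) (Finset.mem_range.mp hk))
    exact add_le_add_right (Finset.le_sup' (fun k => birkhoffSum f g k (f x)) hm) _

/-- Maximal ergodic theorem (for continuous functions). -/
lemma maximal_ergodic (hf : Continuous f) [IsProbabilityMeasure μ]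
    (hfm : MeasurePreserving f μ μ) {g : X → ℝ} (hg : Continuous g) (N : ℕ) :
    0 ≤ ∫ x in {x | 0 < maxSum f g N x}, g x ∂μ := by
  set A := {x | 0 < maxSum f g N x} with hA
  have hMc : Continuous (maxSum f g N) := continuous_maxSum hf hg N
  have hAm : MeasurableSet A := (isOpen_lt continuous_const hMc).measurableSet
  have hMint : Integrable (maxSum f g N) μ := integrable_of_cont hMc
  have hMfint : Integrable (fun x => maxSum f g N (f x)) μ := integrable_of_cont (hMc.comp hf)
  have hgint : Integrable g μ := integrable_of_cont hg
  have h1 : ∫ x in A, (maxSum f g N x - maxSum f g N (f x)) ∂μ ≤ ∫ x in A, g x ∂μ := by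
    refine setIntegral_mono_on ((hMint.sub hMfint).integrableOn) hgint.integrableOn hAm ?_
    intro x hx
    have := maxSum_le_add (f := f) (g := g) (N := N) (x := x) hx
    linarith
  have h2 : ∫ x in Aᶜ, (maxSum f g N x - maxSum f g N (f x)) ∂μ ≤ 0 := by
    refine setIntegral_nonpos hAm.compl ?_
    intro x hx
    have hx' : maxSum f g N x ≤ 0 := not_lt.mp hx
    have h0 := maxSum_nonneg (f := f) g N (f x)
    linarith
  have h3 : ∫ x, (maxSum f g N x - maxSum f g N (f x)) ∂μ = 0 := by
    rw [integral_sub hMint hMfint]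
    have : ∫ x, maxSum f g N (f x) ∂μ = ∫ y, maxSum f g N y ∂μ := by
      calc ∫ x, maxSum f g N (f x) ∂μ
          = ∫ y, maxSum f g N y ∂(Measure.map f μ) :=
            (integral_map hf.aemeasurable hMc.aestronglyMeasurable).symm
        _ = ∫ y, maxSum f g N y ∂μ := by rw [hfm.map_eq]
    rw [this, sub_self]
  have h4 := integral_add_compl hAm (hMint.sub hMfint)
  simp only [Pi.sub_apply] at h4
  linarith

/-- If a.e. point has some positive Birkhoff sum, the integral is nonnegative. -/
lemma integral_nonneg_of_pos_birkhoff (hf : Continuous f) [IsProbabilityMeasure μ]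
    (hfm : MeasurePreserving f μ μ) {g : X → ℝ} (hg : Continuous g)
    (hμ : μ {x | ∃ n, 1 ≤ n ∧ 0 < birkhoffSum f g n x} = 1) : 0 ≤ ∫ x, g x ∂μ := by
  set B := {x | ∃ n, 1 ≤ n ∧ 0 < birkhoffSum f g n x} with hB
  set A : ℕ → Set X := fun N => {x | 0 < maxSum f g N x} with hAdef
  have hAm : ∀ N, MeasurableSet (A N) := fun N =>
    (isOpen_lt continuous_const (continuous_maxSum hf hg N)).measurableSet
  have hmono : Monotone A := by
    intro N M hNM x hx
    have hx' : 0 < maxSum f g N x := hx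
    have hle : maxSum f g N x ≤ maxSum f g M x :=
      Finset.sup'_mono (f := fun k => birkhoffSum f g k x)
        (Finset.range_subset_range.mpr (by omega)) Finset.nonempty_range_add_one
    exact lt_of_lt_of_le hx' hle
  have hUnion : ⋃ N, A N = B := by
    ext x
    simp only [hAdef, hB, mem_iUnion, mem_setOf_eq]
    constructor
    · rintro ⟨N, hN⟩
      obtain ⟨k, hk, hEq⟩ := Finset.exists_mem_eq_sup' (Finset.nonempty_range_add_one (n := N))
        (fun k => birkhoffSum f g k x)
      have hEq' : maxSum f g N x = birkhoffSum f g k x := hEq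
      rw [hEq'] at hN
      refine ⟨k, ?_, hN⟩
      rcases Nat.eq_zero_or_pos k with rfl | hpos
      · simp [birkhoffSum_zero] at hN
      · exact hpos
    · rintro ⟨n, hn1, hn⟩
      exact ⟨n, lt_of_lt_of_le hn (Finset.le_sup' (fun k => birkhoffSum f g k x)
        (Finset.mem_range.mpr (by omega)))⟩
  have hgint : Integrable g μ := integrable_of_cont hg
  have htend := tendsto_setIntegral_of_monotone hAm hmono
    (hgint.integrableOn : IntegrableOn g (⋃ N, A N) μ)
  have hBlim : 0 ≤ ∫ x in ⋃ N, A N, g x ∂μ :=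
    ge_of_tendsto' htend fun N => maximal_ergodic hf hfm hg N
  rw [hUnion] at hBlim
  have hBm : MeasurableSet B := by rw [← hUnion]; exact MeasurableSet.iUnion hAm
  have hcompl : μ Bᶜ = 0 := by
    have h := measure_compl hBm (measure_ne_top μ B)
    rw [hμ, measure_univ] at h
    simpa using h
  have : ∫ x in B, g x ∂μ = ∫ x, g x ∂μ := by
    have h5 := integral_add_compl hBm hgint
    rw [← h5, setIntegral_measure_zero _ hcompl, add_zero]
  linarith [hBlim, this.symm ▸ hBlim]


/-! ### Pointwise ergodic theorem -/

lemma abs_birkAvg_le {f : X → X} {φ : X → ℝ} {M : ℝ} (hM : ∀ y, |φ y| ≤ M) (hM0 : 0 ≤ M)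
    (x : X) (n : ℕ) : |birkhoffSum f φ n x / n| ≤ M := by
  rcases Nat.eq_zero_or_pos n with rfl | h
  · simpa using hM0
  · have h1 : |birkhoffSum f φ n x| ≤ n * M := by
      calc |birkhoffSum f φ n x| ≤ ∑ k ∈ Finset.range n, |φ (f^[k] x)| := by
            rw [birkhoffSum]; exact Finset.abs_sum_le_sum_abs _ _
        _ ≤ ∑ _k ∈ Finset.range n, M := Finset.sum_le_sum fun k _ => hM _
        _ = n * M := by simp [mul_comm]
    have hn : (0:ℝ) < n := by exact_mod_cast h
    rw [abs_div, abs_of_pos hn, div_le_iff₀ hn]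
    linarith [h1]

lemma ae_limsup_le (hf : Continuous f) [IsProbabilityMeasure μ] (herg : Ergodic f μ)
    {φ : X → ℝ} (hφ : Continuous φ) :
    ∀ᵐ x ∂μ, limsup (fun n : ℕ => birkhoffSum f φ n x / n) atTop ≤ ∫ y, φ y ∂μ := by
  set I := ∫ y, φ y ∂μ with hI
  obtain ⟨M, hM0, hM⟩ : ∃ M, 0 ≤ M ∧ ∀ y, |φ y| ≤ M := by
    obtain ⟨C, hC⟩ := isCompact_univ.exists_bound_of_continuousOn hφ.continuousOn
    exact ⟨max C 0, le_max_right _ _, fun y => by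
      have h := (hC y (mem_univ y)).trans (le_max_left C 0)
      rwa [Real.norm_eq_abs] at h⟩
  have habs : ∀ y n, |birkhoffSum f φ n y / n| ≤ M := fun y n => abs_birkAvg_le hM hM0 y n
  have hEnull : ∀ k : ℕ,
      μ {x | I + 1/((k:ℝ)+1) < limsup (fun n : ℕ => birkhoffSum f φ n x / n) atTop} = 0 := by
    intro k
    set a := I + 1/((k:ℝ)+1) with ha
    have haI : I < a := by
      rw [ha]
      have : (0:ℝ) < 1/((k:ℝ)+1) := by positivity
      linarith
    set E := {x | a < limsup (fun n : ℕ => birkhoffSum f φ n x / n) atTop} with hE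
    have hmeas : Measurable fun x => limsup (fun n : ℕ => birkhoffSum f φ n x / n) atTop :=
      Measurable.limsup fun n => ((continuous_birkhoffSum hf hφ n).measurable.div_const _)
    have hEm : MeasurableSet E := measurableSet_lt measurable_const hmeas
    have hinv : f ⁻¹' E = E := by
      ext x
      simp only [hE, mem_preimage, mem_setOf_eq]
      have heq : limsup (fun n : ℕ => birkhoffSum f φ n (f x) / n) atTop
          = limsup (fun n : ℕ => birkhoffSum f φ n x / n) atTop := by
        refine limsup_eq_limsup_of_tendsto_sub
          (bdd_le_of_abs_le (habs (f x))) (bdd_le_of_abs_le (habs x))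
          (bdd_ge_of_abs_le (habs (f x))) (bdd_ge_of_abs_le (habs x)) ?_
        have hdiff : (fun n : ℕ => birkhoffSum f φ n (f x) / n - birkhoffSum f φ n x / n)
            = fun n : ℕ => (φ (f^[n] x) - φ x) / n := by
          funext n
          rw [div_sub_div_same, birkhoffSum_apply_sub_birkhoffSum]
        rw [hdiff]
        refine squeeze_zero_norm (a := fun n : ℕ => (2*M)/n) ?_
          (tendsto_const_div_atTop_nhds_zero_nat (2*M))
        intro n
        rcases Nat.eq_zero_or_pos n with rfl | hn
        · simp
        · have hnpos : (0:ℝ) < n := by exact_mod_cast hn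
          rw [Real.norm_eq_abs, abs_div, abs_of_pos hnpos, div_le_div_iff₀ hnpos hnpos]
          have h1 := abs_le.mp (hM (f^[n] x))
          have h2 := abs_le.mp (hM x)
          have : |φ (f^[n] x) - φ x| ≤ 2 * M := by
            rw [abs_le]; constructor <;> [linarith [h1.1, h2.2]; linarith [h1.2, h2.1]]
          nlinarith [this, hnpos]
      rw [heq]
    rcases herg.toPreErgodic.prob_eq_zero_or_one hEm hinv with h0 | h1
    · exact h0
    · exfalso
      set g : X → ℝ := fun y => φ y - a with hgdef
      have hgc : Continuous g := hφ.sub continuous_const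
      have hsub : E ⊆ {x | ∃ n, 1 ≤ n ∧ 0 < birkhoffSum f g n x} := by
        intro x hx
        have hfreq : ∃ᶠ n in atTop, a < birkhoffSum f φ n x / n :=
          frequently_lt_of_lt_limsup ((bdd_ge_of_abs_le (habs x)).isCoboundedUnder_le) hx
        obtain ⟨n, hn, hn1⟩ := (hfreq.and_eventually (eventually_ge_atTop 1)).exists
        refine ⟨n, hn1, ?_⟩
        have hnpos : (0:ℝ) < n := by exact_mod_cast hn1
        have hlt : a * n < birkhoffSum f φ n x := (lt_div_iff₀ hnpos).mp hn
        have hsum : birkhoffSum f g n x = birkhoffSum f φ n x - n * a := by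
          simp only [hgdef, birkhoffSum, Finset.sum_sub_distrib, Finset.sum_const,
            Finset.card_range, nsmul_eq_mul]
        rw [hsum]
        nlinarith [hlt]
      have hBfull : μ {x | ∃ n, 1 ≤ n ∧ 0 < birkhoffSum f g n x} = 1 := by
        refine le_antisymm prob_le_one ?_
        calc (1:ℝ≥0∞) = μ E := h1.symm
          _ ≤ μ {x | ∃ n, 1 ≤ n ∧ 0 < birkhoffSum f g n x} := measure_mono hsub
      have h0le := integral_nonneg_of_pos_birkhoff hf herg.toMeasurePreserving hgc hBfull
      have hEqI : ∫ y, g y ∂μ = I - a := by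
        rw [hgdef]
        rw [integral_sub (integrable_of_cont hφ) (integrable_const a)]
        simp [hI]
      rw [hEqI] at h0le
      linarith
  have hae : ∀ᵐ x ∂μ, ∀ k : ℕ,
      limsup (fun n : ℕ => birkhoffSum f φ n x / n) atTop ≤ I + 1/((k:ℝ)+1) := by
    rw [ae_all_iff]
    intro k
    have := hEnull k
    rw [ae_iff]
    convert this using 2
    ext x
    simp [not_le]
  filter_upwards [hae] with x hx
  refine le_of_forall_pos_le_add fun ε hε => ?_
  obtain ⟨k, hk⟩ := exists_nat_one_div_lt hε
  exact (hx k).trans (by linarith)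

/-- Birkhoff's pointwise ergodic theorem (continuous observable, ergodic case). -/
lemma ae_tendsto_birkhoff (hf : Continuous f) [IsProbabilityMeasure μ] (herg : Ergodic f μ)
    {φ : X → ℝ} (hφ : Continuous φ) :
    ∀ᵐ x ∂μ, Tendsto (fun n : ℕ => birkhoffSum f φ n x / n) atTop (𝓝 (∫ y, φ y ∂μ)) := by
  obtain ⟨M, hM0, hM⟩ : ∃ M, 0 ≤ M ∧ ∀ y, |φ y| ≤ M := by
    obtain ⟨C, hC⟩ := isCompact_univ.exists_bound_of_continuousOn hφ.continuousOn
    exact ⟨max C 0, le_max_right _ _, fun y => by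
      have h := (hC y (mem_univ y)).trans (le_max_left C 0)
      rwa [Real.norm_eq_abs] at h⟩
  have habs : ∀ y n, |birkhoffSum f φ n y / n| ≤ M := fun y n => abs_birkAvg_le hM hM0 y n
  filter_upwards [ae_limsup_le hf herg hφ, ae_limsup_le hf herg (φ := fun y => -φ y) hφ.neg] with x h1 h2
  have hneg : (fun n : ℕ => birkhoffSum f (fun y => -φ y) n x / n)
      = fun n : ℕ => -(birkhoffSum f φ n x / n) := by
    funext n
    rw [show birkhoffSum f (fun y => -φ y) n x = -birkhoffSum f φ n x by
      simp [birkhoffSum, Finset.sum_neg_distrib], neg_div]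
  rw [hneg] at h2
  have hInt : ∫ y, -φ y ∂μ = -∫ y, φ y ∂μ := integral_neg φ
  rw [hInt] at h2
  refine tendsto_order.mpr ⟨fun a ha => ?_, fun a ha => ?_⟩
  · have hlt : limsup (fun n : ℕ => -(birkhoffSum f φ n x / n)) atTop < -a :=
      lt_of_le_of_lt h2 (by linarith)
    have hev := eventually_lt_of_limsup_lt hlt
      (bdd_le_of_abs_le (fun n => by simpa [abs_neg] using habs x n))
    filter_upwards [hev] with n hn
    linarith
  · exact eventually_lt_of_limsup_lt (lt_of_le_of_lt h1 ha) (bdd_le_of_abs_le (habs x))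

end Stmt16

/-- **Birkhoff averages over dynamical balls.** For an ergodic measure `μ` and a continuous
`φ`, for `μ`-a.e. `x`,
`lim_{ε→0} limsup_n (1/n) S_nφ(B(x,n,ε)) = lim_{ε→0} liminf_n (1/n) S_nφ(B(x,n,ε)) = ∫ φ dμ`. -/
theorem stmt_16 {X : Type*} [MetricSpace X] [CompactSpace X] [MeasurableSpace X] [BorelSpace X]
    (f : X → X) (hf : Continuous f) (μ : Measure X) [IsProbabilityMeasure μ]
    (herg : Ergodic f μ) (φ : X → ℝ) (hφ : Continuous φ) :
    ∀ᵐ x ∂μ,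
      Tendsto (fun ε : ℝ => Filter.atTop.limsup fun n : ℕ => birkSup f φ x n ε / n)
        (𝓝[>] (0:ℝ)) (𝓝 (∫ x, φ x ∂μ)) ∧
      Tendsto (fun ε : ℝ => Filter.atTop.liminf fun n : ℕ => birkSup f φ x n ε / n)
        (𝓝[>] (0:ℝ)) (𝓝 (∫ x, φ x ∂μ)) := by
  filter_upwards [Stmt16.ae_tendsto_birkhoff hf herg hφ] with x hx
  set I := ∫ y, φ y ∂μ with hI
  set u : ℕ → ℝ := fun n => birkhoffSum f φ n x / n with hu
  have key : ∀ r > (0:ℝ), ∀ᶠ ε in 𝓝[>] (0:ℝ),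
      I ≤ liminf (fun n : ℕ => birkSup f φ x n ε / n) atTop ∧
      limsup (fun n : ℕ => birkSup f φ x n ε / n) atTop ≤ I + r/2 ∧
      liminf (fun n : ℕ => birkSup f φ x n ε / n) atTop ≤
        limsup (fun n : ℕ => birkSup f φ x n ε / n) atTop := by
    intro r hr
    obtain ⟨ε₀, hε₀, hmod⟩ := Metric.uniformContinuous_iff.mp
      (CompactSpace.uniformContinuous_of_continuous hφ) (r/2) (by linarith)
    filter_upwards [Ioo_mem_nhdsGT_of_mem (⟨le_refl (0:ℝ), hε₀⟩ : (0:ℝ) ∈ Ico 0 ε₀)]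
      with ε hε
    set b : ℕ → ℝ := fun n => birkSup f φ x n ε / n with hb
    have hxmem : ∀ n, x ∈ dynBall f x n ε := fun n j _ => by simp [hε.1]
    have hub : ∀ n, ∀ z ∈ (fun y => ∑ j ∈ Finset.range n, φ (f^[j] y)) '' dynBall f x n ε,
        z ≤ birkhoffSum f φ n x + n * (r/2) := by
      rintro n z ⟨y, hy, rfl⟩
      calc ∑ j ∈ Finset.range n, φ (f^[j] y)
          ≤ ∑ j ∈ Finset.range n, (φ (f^[j] x) + r/2) := by
            refine Finset.sum_le_sum fun j hj => ?_
            have hd := hy j (Finset.mem_range.mp hj)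
            have hlt : dist (φ (f^[j] x)) (φ (f^[j] y)) < r/2 := hmod (lt_trans hd hε.2)
            rw [Real.dist_eq] at hlt
            have h1 := abs_lt.mp hlt
            linarith [h1.1, h1.2]
        _ = birkhoffSum f φ n x + n * (r/2) := by
            rw [Finset.sum_add_distrib, Finset.sum_const, Finset.card_range, nsmul_eq_mul,
              birkhoffSum]
    have hbdd : ∀ n, BddAbove ((fun y => ∑ j ∈ Finset.range n, φ (f^[j] y)) '' dynBall f x n ε) :=
      fun n => ⟨birkhoffSum f φ n x + n * (r/2), fun z hz => hub n z hz⟩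
    have hlow : ∀ n, birkhoffSum f φ n x ≤ birkSup f φ x n ε := by
      intro n
      have hmem : birkhoffSum f φ n x ∈
          (fun y => ∑ j ∈ Finset.range n, φ (f^[j] y)) '' dynBall f x n ε :=
        ⟨x, hxmem n, by rw [birkhoffSum]⟩
      exact le_csSup (hbdd n) hmem
    have hhigh : ∀ n, birkSup f φ x n ε ≤ birkhoffSum f φ n x + n * (r/2) := fun n =>
      csSup_le ⟨_, Set.mem_image_of_mem _ (hxmem n)⟩ (hub n)
    have hbev1 : ∀ᶠ n : ℕ in atTop, u n ≤ b n := by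
      filter_upwards [eventually_ge_atTop 1] with n hn
      have hnpos : (0:ℝ) ≤ n := by positivity
      exact div_le_div_of_nonneg_right (hlow n) hnpos
    have hbev2 : ∀ᶠ n : ℕ in atTop, b n ≤ u n + r/2 := by
      filter_upwards [eventually_ge_atTop 1] with n hn
      have hnpos : (0:ℝ) < n := by exact_mod_cast hn
      calc b n ≤ (birkhoffSum f φ n x + n * (r/2)) / n :=
            div_le_div_of_nonneg_right (hhigh n) hnpos.le
        _ = u n + r/2 := by
            rw [add_div, mul_div_cancel_left₀ _ (ne_of_gt hnpos)]
    have htend2 : Tendsto (fun n : ℕ => u n + r/2) atTop (𝓝 (I + r/2)) :=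
      hx.add tendsto_const_nhds
    have hbub : IsBoundedUnder (· ≤ ·) atTop b :=
      (htend2.isBoundedUnder_le).mono_le hbev2
    have hblb : IsBoundedUnder (· ≥ ·) atTop b :=
      (hx.isBoundedUnder_ge).mono_ge hbev1
    refine ⟨?_, ?_, liminf_le_limsup hbub hblb⟩
    · calc I = liminf u atTop := hx.liminf_eq.symm
        _ ≤ liminf b atTop := liminf_le_liminf hbev1 hx.isBoundedUnder_ge
            hbub.isCoboundedUnder_ge
    · calc limsup b atTop ≤ limsup (fun n : ℕ => u n + r/2) atTop :=
          limsup_le_limsup hbev2 hblb.isCoboundedUnder_le htend2.isBoundedUnder_le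
        _ = I + r/2 := htend2.limsup_eq
  constructor
  · refine Metric.tendsto_nhds.mpr fun r hr => ?_
    filter_upwards [key r hr] with ε hεk
    obtain ⟨h1, h2, h3⟩ := hεk
    rw [Real.dist_eq, abs_lt]
    constructor <;> [linarith; linarith]
  · refine Metric.tendsto_nhds.mpr fun r hr => ?_
    filter_upwards [key r hr] with ε hεk
    obtain ⟨h1, h2, h3⟩ := hεk
    rw [Real.dist_eq, abs_lt]
    constructor <;> [linarith; linarith]

end
end
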